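/- arXiv:1803.07455 — 4 statements merged into one kernel-verified Lean document; each statement's English description precedes it below -/
import Mathlib

section
/- For all integers k ≥ 1 and n ≥ 1, the list chromatic number of the Cartesian product of the odd cycle C_{2k+1} and the path P_n equals 3; in particular C_{2k+1} □ P_n is chromatic-choosable. -/
open SimpleGraph Finset

attribute [local instance] Classical.propDecidable

namespace ATPaper

/-- An orientation of a simple graph: each edge receives exactly one direction,
and arcs only exist along edges. -/
structure GraphOrientation {V : Type*} (G : SimpleGraph V) where
  arc : V → V → Prop
  arc_adj : ∀ u v, arc u v → G.Adj u v
  adj_arc : ∀ u v, G.Adj u v → (arc u v ↔ ¬ arc v u)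

variable {V : Type*} [Fintype V]

/-- The set of arcs of an orientation. -/
noncomputable def GraphOrientation.arcs {G : SimpleGraph V} (D : GraphOrientation G) :
    Finset (V × V) :=
  Finset.univ.filter fun p => D.arc p.1 p.2

/-- In-degree of a vertex in a finite set of arcs. -/
noncomputable def indeg (F : Finset (V × V)) (v : V) : ℕ :=
  (F.filter fun p => p.2 = v).card

/-- Out-degree of a vertex in a finite set of arcs. -/
noncomputable def outdeg (F : Finset (V × V)) (v : V) : ℕ :=
  (F.filter fun p => p.1 = v).card

/-- The circulations contained in an orientation `D`: spanning subdigraphs (sets of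
arcs of `D`) in which every vertex has in-degree equal to out-degree. -/
noncomputable def circulations {G : SimpleGraph V} (D : GraphOrientation G) :
    Finset (Finset (V × V)) :=
  D.arcs.powerset.filter fun F => ∀ v, indeg F v = outdeg F v

/-- `G` has an Alon–Tarsi orientation witnessing the bound `k`: an orientation with
maximum in-degree at most `k - 1` in which the numbers of even and odd circulations
differ. -/
noncomputable def HasATOrientation (G : SimpleGraph V) (k : ℕ) : Prop :=
  ∃ D : GraphOrientation G,
    (∀ v, indeg D.arcs v + 1 ≤ k) ∧
    ((circulations D).filter fun F => Even F.card).card ≠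
      ((circulations D).filter fun F => Odd F.card).card

/-- The Alon–Tarsi number of `G`. -/
noncomputable def alonTarsiNumber (G : SimpleGraph V) : ℕ :=
  sInf {k | HasATOrientation G k}

/-- `G` admits a proper coloring from the list assignment `L`. -/
def Choosable {W : Type*} (G : SimpleGraph W) (L : W → Finset ℕ) : Prop :=
  ∃ f : W → ℕ, (∀ v, f v ∈ L v) ∧ ∀ u v, G.Adj u v → f u ≠ f v

/-- `G` is `k`-choosable: colorable from every list assignment with lists of size at
least `k`. -/
def IsKChoosable {W : Type*} (G : SimpleGraph W) (k : ℕ) : Prop :=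
  ∀ L : W → Finset ℕ, (∀ v, k ≤ (L v).card) → Choosable G L

/-- The list chromatic number of `G`. -/
noncomputable def listChromaticNumber {W : Type*} (G : SimpleGraph W) : ℕ :=
  sInf {k | IsKChoosable G k}

/-- The `r`-th power of a graph: distinct vertices are adjacent iff their distance
is at most `r`. -/
def graphPower {W : Type*} (G : SimpleGraph W) (r : ℕ) : SimpleGraph W where
  Adj u v := u ≠ v ∧ G.Reachable u v ∧ G.dist u v ≤ r
  symm := by
    constructor
    rintro u v ⟨h1, h2, h3⟩
    exact ⟨h1.symm, h2.symm, by rwa [SimpleGraph.dist_comm]⟩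
  loopless := by constructor; rintro v ⟨h1, -, -⟩; exact h1 rfl

/-- The join of two vertex-disjoint graphs. -/
def joinGraph {A B : Type*} (G : SimpleGraph A) (H : SimpleGraph B) :
    SimpleGraph (A ⊕ B) where
  Adj x y :=
    match x, y with
    | Sum.inl a, Sum.inl b => G.Adj a b
    | Sum.inr a, Sum.inr b => H.Adj a b
    | Sum.inl _, Sum.inr _ => True
    | Sum.inr _, Sum.inl _ => True
  symm := by
    constructor
    rintro (a | a) (b | b) h
    · exact G.adj_symm h
    · trivial
    · trivial
    · exact H.adj_symm h
  loopless := by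
    constructor
    rintro (a | a) h
    · exact G.irrefl h
    · exact H.irrefl h


namespace ATCore



/-- proper coloring of the cycle 0,1,...,m-1 (indices mod m) -/
def Pcyc (m : ℕ) (c : ℕ → ℕ) : Prop := ∀ i, i < m → c i ≠ c ((i+1) % m)

def Mem (m : ℕ) (l : ℕ → Finset ℕ) (c : ℕ → ℕ) : Prop := ∀ i, i < m → c i ∈ l i

def Good (m : ℕ) (l : ℕ → Finset ℕ) : Prop :=
  (∀ i, i < m → 2 ≤ (l i).card) ∧ ¬ ∃ S : Finset ℕ, S.card = 2 ∧ ∀ i, i < m → l i = S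

-- modular arithmetic helpers
theorem mod_helper1 {m : ℕ} (s t : ℕ) (hs : s < m) : ((s+t) % m + m - s) % m = t % m := by
  have h1 : s ≤ (s+t) % m + m := le_trans hs.le (Nat.le_add_left m _)
  have h2 : ((s+t) % m + m - s) + s = (s+t) % m + m := Nat.sub_add_cancel h1
  have h3 : Nat.ModEq m (((s+t) % m + m - s) + s) (t + s) := by
    rw [h2]
    calc (s+t) % m + m ≡ (s+t) % m [MOD m] := Nat.ModEq.add_right_cancel' 0 (by simpa using (Nat.add_mod_right _ m) ▸ Nat.ModEq.refl _)
      _ ≡ s + t [MOD m] := (Nat.mod_modEq _ _)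
      _ = t + s := by ring
  exact Nat.ModEq.add_right_cancel' s h3
theorem mod_helper2 {m : ℕ} (s i : ℕ) (hs : s < m) : (s + (i + m - s) % m) % m = i % m := by
  have h1 : s ≤ i + m := le_trans hs.le (Nat.le_add_left m _)
  have h3 : Nat.ModEq m (s + (i + m - s) % m) (s + (i + m - s)) := Nat.ModEq.add_left s (Nat.mod_modEq _ _)
  have h4 : s + (i + m - s) = i + m := by omega
  calc (s + (i + m - s) % m) % m = (s + (i+m-s)) % m := h3
    _ = (i + m) % m := by rw [h4]
    _ = i % m := Nat.add_mod_right i m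
theorem mod_helper3 {m : ℕ} (s i : ℕ) (hs : s < m) :
    ((i+1) % m + m - s) % m = ((i + m - s) % m + 1) % m := by
  have h1 : s ≤ (i+1) % m + m := le_trans hs.le (Nat.le_add_left m _)
  have e1 : ((i+1) % m + m - s) + s = (i+1) % m + m := Nat.sub_add_cancel h1
  have e2 : ((i + m - s) % m + 1) + s = (i + m - s) % m + 1 + s := rfl
  apply Nat.ModEq.add_right_cancel' s
  calc ((i+1) % m + m - s) + s = (i+1) % m + m := e1
    _ ≡ (i+1) + m [MOD m] := Nat.ModEq.add_right m (Nat.mod_modEq _ _)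
    _ = (i + m) + 1 := by ring
    _ ≡ ((i + m - s) % m + s) + 1 [MOD m] := by
        apply Nat.ModEq.add_right 1
        have : (i + m - s) + s = i + m := by omega
        calc i + m = (i + m - s) + s := this.symm
          _ ≡ (i + m - s) % m + s [MOD m] := Nat.ModEq.add_right s (Nat.mod_modEq _ _).symm
    _ = ((i + m - s) % m + 1) + s := by ring

/-- transfer a coloring given in "offset space" (t-th vertex is (s+t)%m) to a cycle coloring -/
theorem transfer {m : ℕ} (l : ℕ → Finset ℕ) (s : ℕ) (hs : s < m) (hm : 3 ≤ m) (d : ℕ → ℕ)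
    (hmem : ∀ t, t < m → d t ∈ l ((s+t) % m))
    (hstep : ∀ t, t + 1 < m → d t ≠ d (t+1))
    (hwrap : d (m-1) ≠ d 0) :
    ∃ c : ℕ → ℕ, Pcyc m c ∧ Mem m l c ∧ ∀ t, t < m → c ((s+t) % m) = d t := by
  refine ⟨fun i => d ((i + m - s) % m), ?_, ?_, ?_⟩
  · intro i hi
    have ht : (i + m - s) % m < m := Nat.mod_lt _ (by omega)
    have h3 := mod_helper3 (m := m) s i hs
    simp only []
    rw [h3]
    set t := (i + m - s) % m with htdef
    rcases Nat.lt_or_ge (t+1) m with h | h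
    · rw [Nat.mod_eq_of_lt h]
      exact hstep t h
    · have htm : t + 1 = m := by omega
      have h0 : (t+1) % m = 0 := by rw [htm, Nat.mod_self]
      have htm1 : t = m - 1 := by omega
      rw [h0, htm1]
      exact hwrap
  · intro i hi
    have ht : (i + m - s) % m < m := Nat.mod_lt _ (by omega)
    have := hmem _ ht
    rwa [mod_helper2 s i hs, Nat.mod_eq_of_lt hi] at this
  · intro t ht
    simp only []
    rw [mod_helper1 s t hs, Nat.mod_eq_of_lt ht]



noncomputable def pmin (S : Finset ℕ) : ℕ := if h : S.Nonempty then S.min' h else 0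
noncomputable def pmax (S : Finset ℕ) : ℕ := if h : S.Nonempty then S.max' h else 0

theorem pmin_mem {S : Finset ℕ} (h : S.Nonempty) : pmin S ∈ S := by
  rw [pmin, dif_pos h]; exact S.min'_mem h
theorem pmax_mem {S : Finset ℕ} (h : S.Nonempty) : pmax S ∈ S := by
  rw [pmax, dif_pos h]; exact S.max'_mem h
theorem eq_pmin_of_pmin_eq_pmax {S : Finset ℕ} (h : S.Nonempty) (he : pmin S = pmax S)
    {x : ℕ} (hx : x ∈ S) : x = pmin S := by
  rw [pmin, dif_pos h] at *
  rw [pmax, dif_pos h] at he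
  have h1 := S.min'_le x hx
  have h2 := S.le_max' x hx
  omega

noncomputable def gr (l : ℕ → Finset ℕ) (m s a : ℕ) (pk : Finset ℕ → ℕ) : ℕ → ℕ
  | 0 => a
  | t+1 => pk (l ((s + (t+1)) % m) \ {gr l m s a pk t})

theorem gr_spec (l : ℕ → Finset ℕ) (m s a : ℕ) (pk : Finset ℕ → ℕ)
    (hpk : ∀ S : Finset ℕ, S.Nonempty → pk S ∈ S)
    (hm : 0 < m) (hcard : ∀ i, i < m → 2 ≤ (l i).card) (t : ℕ) :
    gr l m s a pk (t+1) ∈ l ((s + (t+1)) % m) ∧ gr l m s a pk (t+1) ≠ gr l m s a pk t := by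
  have hlt : (s + (t+1)) % m < m := Nat.mod_lt _ hm
  have hne : (l ((s + (t+1)) % m) \ {gr l m s a pk t}).Nonempty := by
    apply Finset.card_pos.mp
    have := Finset.le_card_sdiff ({gr l m s a pk t}) (l ((s + (t+1)) % m))
    have := hcard _ hlt
    simp only [Finset.card_singleton] at *
    omega
  have hmem : gr l m s a pk (t+1) ∈ l ((s + (t+1)) % m) \ {gr l m s a pk t} := by
    rw [gr]; exact hpk _ hne
  rw [Finset.mem_sdiff, Finset.mem_singleton] at hmem
  exact ⟨hmem.1, hmem.2⟩



/-- the alternating coloring x y x y ... x y z on an odd cycle with all lists equal -/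
theorem parity_col {m : ℕ} (l : ℕ → Finset ℕ) (hm : 3 ≤ m) (hodd : Odd m)
    (hall : ∀ i, i < m → l i = l 0) (x y z : ℕ)
    (hx : x ∈ l 0) (hy : y ∈ l 0) (hz : z ∈ l 0)
    (hxy : x ≠ y) (hxz : x ≠ z) (hyz : y ≠ z) :
    Pcyc m (fun i => if i = m-1 then z else if i % 2 = 0 then x else y) ∧
    Mem m l (fun i => if i = m-1 then z else if i % 2 = 0 then x else y) := by
  obtain ⟨kk, hkk⟩ := hodd
  constructor
  · intro i hi
    simp only []
    rcases Nat.lt_or_ge i (m-1) with h | h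
    · have h1 : (i+1) % m = i + 1 := Nat.mod_eq_of_lt (by omega)
      rw [h1, if_neg (by omega : ¬ i = m-1)]
      by_cases h2 : i + 1 = m - 1
      · rw [if_pos h2]
        rcases Nat.even_or_odd i with he | ho
        · rw [if_pos (Nat.even_iff.mp he)]; exact hxz
        · rw [if_neg (by omega : ¬ i % 2 = 0)]
          exact hyz
      · rw [if_neg h2]
        rcases Nat.even_or_odd i with he | ho
        · rw [if_pos (Nat.even_iff.mp he), if_neg (by
            have := Nat.even_iff.mp he; omega : ¬ (i+1) % 2 = 0)]
          exact hxy
        · rw [if_neg (by have := Nat.odd_iff.mp ho; omega : ¬ i % 2 = 0),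
            if_pos (by have := Nat.odd_iff.mp ho; omega : (i+1) % 2 = 0)]
          exact hxy.symm
    · have hieq : i = m - 1 := by omega
      have h1 : (i+1) % m = 0 := by
        have : i + 1 = m := by omega
        rw [this, Nat.mod_self]
      subst hieq
      rw [h1, if_pos rfl, if_neg (by omega : ¬ (0:ℕ) = m-1), if_pos rfl]
      exact fun hc => hxz hc.symm
  · intro i hi
    simp only []
    rw [hall i hi]
    by_cases h : i = m-1
    · rw [if_pos h]; exact hz
    · rw [if_neg h]
      by_cases h2 : i % 2 = 0
      · rw [if_pos h2]; exact hx
      · rw [if_neg h2]; exact hy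



theorem two_colorings {m : ℕ} (l : ℕ → Finset ℕ) (hm : 3 ≤ m) (hodd : Odd m)
    (hg : Good m l) :
    ∃ c₁ c₂ : ℕ → ℕ, Pcyc m c₁ ∧ Mem m l c₁ ∧ Pcyc m c₂ ∧ Mem m l c₂ ∧
      ∃ i, i < m ∧ c₁ i ≠ c₂ i := by
  by_cases hall : ∀ i, i < m → l i = l 0
  · -- all lists equal, so card ≥ 3
    have h3 : 3 ≤ (l 0).card := by
      have h2 := hg.1 0 (by omega)
      rcases Nat.lt_or_ge (l 0).card 3 with h | h
      · exfalso
        exact hg.2 ⟨l 0, by omega, hall⟩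
      · exact h
    have hne0 : (l 0).Nonempty := Finset.card_pos.mp (by omega)
    obtain ⟨x, hx⟩ := hne0
    have hey : 0 < ((l 0).erase x).card := by
      rw [Finset.card_erase_of_mem hx]; omega
    obtain ⟨y, hy⟩ := Finset.card_pos.mp hey
    have hez : 0 < (((l 0).erase x).erase y).card := by
      rw [Finset.card_erase_of_mem hy, Finset.card_erase_of_mem hx]; omega
    obtain ⟨z, hz⟩ := Finset.card_pos.mp hez
    have hy0 : y ∈ l 0 := Finset.mem_of_mem_erase hy
    have hz0 : z ∈ l 0 := Finset.mem_of_mem_erase (Finset.mem_of_mem_erase hz)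
    have hxy : x ≠ y := fun h => (Finset.ne_of_mem_erase hy) h.symm
    have hyz : y ≠ z := fun h => (Finset.ne_of_mem_erase hz) h.symm
    have hxz : x ≠ z := fun h => (Finset.ne_of_mem_erase (Finset.mem_of_mem_erase hz)) h.symm
    obtain ⟨p1, m1⟩ := parity_col l hm hodd hall x y z hx hy0 hz0 hxy hxz hyz
    obtain ⟨p2, m2⟩ := parity_col l hm hodd hall y x z hy0 hx hz0 hxy.symm hyz hxz
    refine ⟨_, _, p1, m1, p2, m2, 0, by omega, ?_⟩
    have h0 : ¬ (0:ℕ) = m - 1 := by omega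
    simpa [h0] using hxy
  · -- lists not all equal: find an edge with a fresh color
    have hp : ∃ p, p < m ∧ ¬ (l ((p+1) % m) ⊆ l p) := by
      by_contra hnp
      push_neg at hnp
      apply hall
      have hstep' : ∀ t, t + 1 < m → l (t+1) ⊆ l t := by
        intro t ht
        have := hnp t (by omega)
        rwa [Nat.mod_eq_of_lt ht] at this
      have hchain : ∀ j t, t + j < m → l (t+j) ⊆ l t := by
        intro j
        induction j with
        | zero => intro t _; exact Finset.Subset.refl _
        | succ j ih =>
          intro t ht
          have h1 : l (t + j + 1) ⊆ l (t + j) := hstep' (t+j) (by omega)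
          exact Finset.Subset.trans h1 (ih t (by omega))
      have h0 : l 0 ⊆ l (m-1) := by
        have := hnp (m-1) (by omega)
        have hh : (m-1+1) % m = 0 := by
          have h : m - 1 + 1 = m := by omega
          rw [h, Nat.mod_self]
        rwa [hh] at this
      intro i hi
      apply Finset.Subset.antisymm
      · have := hchain i 0 (by omega)
        simpa using this
      · refine Finset.Subset.trans h0 ?_
        have := hchain (m-1-i) i (by omega)
        rwa [(by omega : i + (m-1-i) = m-1)] at this
    obtain ⟨p, hpm, hpsub⟩ := hp
    obtain ⟨a, ha, hano⟩ := Finset.not_subset.mp hpsub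
    set s := (p+1) % m with hsdef
    have hs : s < m := Nat.mod_lt _ (by omega)
    have hkey : (s + (m-1)) % m = p := by
      have h1 : Nat.ModEq m (s + (m-1)) (p + m) := by
        calc s + (m-1) ≡ (p+1) + (m-1) [MOD m] := Nat.ModEq.add_right _ (Nat.mod_modEq _ _)
          _ = p + m := by omega
      calc (s + (m-1)) % m = (p + m) % m := h1
        _ = p % m := Nat.add_mod_right p m
        _ = p := Nat.mod_eq_of_lt hpm
    have ha_s : a ∈ l s := ha
    set d1 := gr l m s a pmin with hd1
    set d2 := gr l m s a pmax with hd2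
    have hspec1 := fun t => gr_spec l m s a pmin (fun S h => pmin_mem h) (by omega) hg.1 t
    have hspec2 := fun t => gr_spec l m s a pmax (fun S h => pmax_mem h) (by omega) hg.1 t
    have hmem1 : ∀ t, t < m → d1 t ∈ l ((s+t) % m) := by
      intro t ht
      match t with
      | 0 => rw [Nat.add_zero, Nat.mod_eq_of_lt hs]; exact ha_s
      | (u+1) => exact (hspec1 u).1
    have hmem2 : ∀ t, t < m → d2 t ∈ l ((s+t) % m) := by
      intro t ht
      match t with
      | 0 => rw [Nat.add_zero, Nat.mod_eq_of_lt hs]; exact ha_s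
      | (u+1) => exact (hspec2 u).1
    have hwrap1 : d1 (m-1) ≠ d1 0 := by
      intro hcon
      have h1 : d1 (m-1) ∈ l ((s + (m-1)) % m) := hmem1 _ (by omega)
      rw [hkey, hcon] at h1
      exact hano h1
    have hwrap2 : d2 (m-1) ≠ d2 0 := by
      intro hcon
      have h1 : d2 (m-1) ∈ l ((s + (m-1)) % m) := hmem2 _ (by omega)
      rw [hkey, hcon] at h1
      exact hano h1
    obtain ⟨c₁, hc₁p, hc₁m, he₁⟩ := transfer l s hs hm d1 hmem1
      (fun t _ => ((hspec1 t).2).symm) hwrap1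
    obtain ⟨c₂, hc₂p, hc₂m, he₂⟩ := transfer l s hs hm d2 hmem2
      (fun t _ => ((hspec2 t).2).symm) hwrap2
    by_cases hdiff : ∃ i, i < m ∧ c₁ i ≠ c₂ i
    · obtain ⟨i, hi, hne⟩ := hdiff
      exact ⟨c₁, c₂, hc₁p, hc₁m, hc₂p, hc₂m, i, hi, hne⟩
    push_neg at hdiff
    have hgr : ∀ t, t < m → d1 t = d2 t := by
      intro t ht
      have h1 := he₁ t ht
      have h2 := he₂ t ht
      have h3 := hdiff _ (Nat.mod_lt (s+t) (by omega))
      rw [h1, h2] at h3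
      exact h3
    have hpair : ∀ t, t + 1 < m → l ((s+(t+1)) % m) = {d1 t, d1 (t+1)} ∧ d1 t ≠ d1 (t+1) := by
      intro t ht
      have hAne : (l ((s + (t+1)) % m) \ {d1 t}).Nonempty := by
        apply Finset.card_pos.mp
        have h4 := Finset.le_card_sdiff ({d1 t}) (l ((s + (t+1)) % m))
        have h5 := hg.1 _ (Nat.mod_lt (s+(t+1)) (by omega))
        simp only [Finset.card_singleton] at *
        omega
      have e1 : d1 (t+1) = pmin (l ((s + (t+1)) % m) \ {d1 t}) := by
        rw [hd1]; simp only [gr]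
      have e2 : d2 (t+1) = pmax (l ((s + (t+1)) % m) \ {d2 t}) := by
        rw [hd2]; simp only [gr]
      have hminmax : pmin (l ((s + (t+1)) % m) \ {d1 t}) = pmax (l ((s + (t+1)) % m) \ {d1 t}) := by
        rw [← hgr t (by omega)] at e2
        rw [← e1, ← e2]
        exact hgr (t+1) ht
      have hsingle : l ((s + (t+1)) % m) \ {d1 t} = {d1 (t+1)} := by
        rw [Finset.eq_singleton_iff_unique_mem]
        constructor
        · rw [e1]; exact pmin_mem hAne
        · intro x hxm
          rw [e1]
          exact eq_pmin_of_pmin_eq_pmax hAne hminmax hxm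
      have hd1mem : d1 (t+1) ∈ l ((s + (t+1)) % m) \ {d1 t} := by
        rw [hsingle]; exact Finset.mem_singleton_self _
      rw [Finset.mem_sdiff, Finset.mem_singleton] at hd1mem
      have hne' : d1 t ≠ d1 (t+1) := fun h => hd1mem.2 h.symm
      refine ⟨?_, hne'⟩
      have hsub : l ((s + (t+1)) % m) ⊆ {d1 t, d1 (t+1)} := by
        intro x hxm
        by_cases hxe : x = d1 t
        · rw [hxe]; exact Finset.mem_insert_self _ _
        · have hx2 : x ∈ l ((s + (t+1)) % m) \ {d1 t} := by
            rw [Finset.mem_sdiff, Finset.mem_singleton]; exact ⟨hxm, hxe⟩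
          rw [hsingle, Finset.mem_singleton] at hx2
          rw [hx2]
          exact Finset.mem_insert_of_mem (Finset.mem_singleton_self _)
      apply Finset.Subset.antisymm hsub
      intro x hxm
      rw [Finset.mem_insert, Finset.mem_singleton] at hxm
      rcases hxm with h | h
      · rw [h]
        by_contra hnot
        have hdisj : l ((s + (t+1)) % m) \ {d1 t} = l ((s + (t+1)) % m) :=
          Finset.sdiff_eq_self_of_disjoint (Finset.disjoint_singleton_right.mpr hnot)
        have hcard2 := hg.1 _ (Nat.mod_lt (s+(t+1)) (by omega : 0 < m))
        rw [← hdisj, hsingle] at hcard2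
        simp at hcard2
      · rw [h]; exact hd1mem.1
    have hy01 : d1 0 ≠ d1 1 := (hpair 0 (by omega)).2
    have hlp : l p = {d1 (m-2), d1 (m-1)} := by
      have h := (hpair (m-2) (by omega)).1
      rwa [(by omega : m - 2 + 1 = m - 1), hkey] at h
    have hym2 : d1 (m-2) ≠ a := by
      intro h
      apply hano
      rw [hlp, ← h]
      exact Finset.mem_insert_self _ _
    have hym1 : d1 (m-1) ≠ a := by
      intro h
      apply hano
      rw [hlp, ← h]
      exact Finset.mem_insert_of_mem (Finset.mem_singleton_self _)
    have hy0 : d1 0 = a := rfl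
    by_cases hw : ∃ w ∈ l s, w ≠ a ∧ w ≠ d1 (m-2)
    · -- all-down coloring
      obtain ⟨w, hws, hwa, hwm2⟩ := hw
      obtain ⟨c₃, hc₃p, hc₃m, he₃⟩ := transfer l s hs hm
        (fun t => if t = 0 then w else d1 (t-1))
        (by
          intro t ht
          match t with
          | 0 =>
            show (if (0:ℕ) = 0 then w else d1 (0-1)) ∈ l ((s+0) % m)
            rw [if_pos rfl, Nat.add_zero, Nat.mod_eq_of_lt hs]
            exact hws
          | (u+1) =>
            show (if u+1 = 0 then w else d1 (u+1-1)) ∈ l ((s+(u+1)) % m)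
            rw [if_neg (Nat.succ_ne_zero u), (hpair u (by omega)).1, Nat.add_sub_cancel]
            exact Finset.mem_insert_self _ _)
        (by
          intro t ht
          match t with
          | 0 =>
            show (if (0:ℕ) = 0 then w else d1 (0-1)) ≠
              (if (0:ℕ)+1 = 0 then w else d1 (0+1-1))
            rw [if_pos rfl, if_neg (Nat.succ_ne_zero 0)]
            exact hwa
          | (u+1) =>
            show (if u+1 = 0 then w else d1 (u+1-1)) ≠
              (if u+1+1 = 0 then w else d1 (u+1+1-1))
            rw [if_neg (Nat.succ_ne_zero u), if_neg (Nat.succ_ne_zero (u+1)),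
              Nat.add_sub_cancel, Nat.add_sub_cancel]
            exact (hpair u (by omega)).2)
        (by
          show (if m-1 = 0 then w else d1 (m-1-1)) ≠ (if (0:ℕ) = 0 then w else d1 (0-1))
          rw [if_neg (by omega : ¬ m-1 = 0), if_pos rfl, (by omega : m-1-1 = m-2)]
          exact fun h => hwm2 h.symm)
      refine ⟨c₁, c₃, hc₁p, hc₁m, hc₃p, hc₃m, (s+1) % m, Nat.mod_lt _ (by omega), ?_⟩
      rw [he₁ 1 (by omega), he₃ 1 (by omega)]
      show d1 1 ≠ (if (1:ℕ) = 0 then w else d1 (1-1))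
      rw [if_neg (by omega : ¬ (1:ℕ) = 0)]
      exact hy01.symm
    · push_neg at hw
      have hls : l s = {a, d1 (m-2)} := by
        apply Finset.eq_of_subset_of_card_le
        · intro x hxm
          rcases eq_or_ne x a with h | h
          · rw [h]; exact Finset.mem_insert_self _ _
          · rw [hw x hxm h]
            exact Finset.mem_insert_of_mem (Finset.mem_singleton_self _)
        · have h1 : ({a, d1 (m-2)} : Finset ℕ).card ≤ 2 :=
            Finset.card_insert_le _ _ |>.trans (by simp)
          have h2 := hg.1 s hs
          omega
      by_cases hsw : ∃ t, 1 ≤ t ∧ t + 1 ≤ m - 1 ∧ d1 (t-1) ≠ d1 (t+1)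
      · -- down-then-up coloring
        obtain ⟨t, ht1, ht2, htne⟩ := hsw
        obtain ⟨c₃, hc₃p, hc₃m, he₃⟩ := transfer l s hs hm
          (fun r => if r = 0 then d1 (m-2) else if r ≤ t then d1 (r-1) else d1 r)
          (by
            intro r hr
            match r with
            | 0 =>
              show (if (0:ℕ) = 0 then d1 (m-2) else if 0 ≤ t then d1 (0-1) else d1 0) ∈
                l ((s+0) % m)
              rw [if_pos rfl, Nat.add_zero, Nat.mod_eq_of_lt hs, hls]
              exact Finset.mem_insert_of_mem (Finset.mem_singleton_self _)
            | (u+1) =>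
              show (if u+1 = 0 then d1 (m-2) else if u+1 ≤ t then d1 (u+1-1) else d1 (u+1)) ∈
                l ((s+(u+1)) % m)
              rw [if_neg (Nat.succ_ne_zero u), (hpair u (by omega)).1]
              by_cases h : u+1 ≤ t
              · rw [if_pos h, Nat.add_sub_cancel]
                exact Finset.mem_insert_self _ _
              · rw [if_neg h]
                exact Finset.mem_insert_of_mem (Finset.mem_singleton_self _))
          (by
            intro r hr
            match r with
            | 0 =>
              show (if (0:ℕ) = 0 then d1 (m-2) else if 0 ≤ t then d1 (0-1) else d1 0) ≠
                (if (0:ℕ)+1 = 0 then d1 (m-2) else if 0+1 ≤ t then d1 (0+1-1) else d1 (0+1))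
              rw [if_pos rfl, if_neg (Nat.succ_ne_zero 0), if_pos (by omega : 0+1 ≤ t)]
              exact hym2
            | (u+1) =>
              show (if u+1 = 0 then d1 (m-2) else if u+1 ≤ t then d1 (u+1-1) else d1 (u+1)) ≠
                (if u+1+1 = 0 then d1 (m-2) else if u+1+1 ≤ t then d1 (u+1+1-1) else d1 (u+1+1))
              rw [if_neg (Nat.succ_ne_zero u), if_neg (Nat.succ_ne_zero (u+1))]
              rcases Nat.lt_trichotomy (u+1) t with h | h | h
              · rw [if_pos (by omega : u+1 ≤ t), if_pos (by omega : u+1+1 ≤ t),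
                  Nat.add_sub_cancel, Nat.add_sub_cancel]
                exact (hpair u (by omega)).2
              · rw [if_pos (by omega : u+1 ≤ t), if_neg (by omega : ¬ u+1+1 ≤ t),
                  Nat.add_sub_cancel]
                have e1 : u = t-1 := by omega
                have e2 : u+1+1 = t+1 := by omega
                rw [e2, e1]
                exact htne
              · rw [if_neg (by omega : ¬ u+1 ≤ t), if_neg (by omega : ¬ u+1+1 ≤ t)]
                exact (hpair (u+1) hr).2)
          (by
            show (if m-1 = 0 then d1 (m-2) else if m-1 ≤ t then d1 (m-1-1) else d1 (m-1)) ≠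
              (if (0:ℕ) = 0 then d1 (m-2) else if 0 ≤ t then d1 (0-1) else d1 0)
            rw [if_neg (by omega : ¬ m-1 = 0), if_neg (by omega : ¬ m-1 ≤ t), if_pos rfl]
            have h := (hpair (m-2) (by omega)).2
            rw [(by omega : m-2+1 = m-1)] at h
            exact h.symm)
        refine ⟨c₁, c₃, hc₁p, hc₁m, hc₃p, hc₃m, (s+t) % m, Nat.mod_lt _ (by omega), ?_⟩
        rw [he₁ t (by omega), he₃ t (by omega)]
        show d1 t ≠ (if t = 0 then d1 (m-2) else if t ≤ t then d1 (t-1) else d1 t)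
        rw [if_neg (by omega : ¬ t = 0), if_pos le_rfl]
        have h := (hpair (t-1) (by omega)).2
        rw [(by omega : t-1+1 = t)] at h
        exact h.symm
      · -- alternating case: contradiction with Good
        exfalso
        push_neg at hsw
        have hpar : ∀ t, t ≤ m - 1 → d1 t = d1 (t % 2) := by
          intro t
          induction t using Nat.strong_induction_on with
          | _ t ih =>
            match t, ih with
            | 0, _ => intro _; rfl
            | 1, _ => intro _; rfl
            | (u+2), ih =>
              intro ht
              have h1 : d1 u = d1 (u+2) := by
                have h := hsw (u+1) (by omega) (by omega)
                simpa using h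
              rw [← h1, ih u (by omega) (by omega), (by omega : (u+2) % 2 = u % 2)]
        apply hg.2
        refine ⟨{d1 0, d1 1}, ?_, ?_⟩
        · rw [Finset.card_insert_of_notMem (by simpa using hy01)]
          simp
        intro i hi
        obtain ⟨t, htm, hit⟩ : ∃ t, t < m ∧ (s + t) % m = i :=
          ⟨(i + m - s) % m, Nat.mod_lt _ (by omega), by
            rw [mod_helper2 s i hs, Nat.mod_eq_of_lt hi]⟩
        match t, htm, hit with
        | 0, _, hit =>
          rw [Nat.add_zero, Nat.mod_eq_of_lt hs] at hit
          rw [← hit, hls]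
          have hm2 : d1 (m-2) = d1 1 := by
            have h := hpar (m-2) (by omega)
            obtain ⟨kk, hkk⟩ := hodd
            rwa [(by omega : (m-2) % 2 = 1)] at h
          rw [hm2]
          have hda : d1 0 = a := rfl
          rw [← hda]
        | (u+1), htm, hit =>
          rw [← hit, (hpair u htm).1]
          have e1 : d1 u = d1 (u % 2) := hpar u (by omega)
          have e2 : d1 (u+1) = d1 ((u+1) % 2) := hpar (u+1) (by omega)
          rcases Nat.even_or_odd u with he | ho
          · rw [e1, e2, (Nat.even_iff.mp he),
              (by have := Nat.even_iff.mp he; omega : (u+1) % 2 = 1)]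
          · rw [e1, e2, (Nat.odd_iff.mp ho),
              (by have := Nat.odd_iff.mp ho; omega : (u+1) % 2 = 0)]
            exact Finset.pair_comm _ _


def BadPat (m : ℕ) (lp : ℕ → Finset ℕ) (c : ℕ → ℕ) : Prop :=
  ∃ S : Finset ℕ, S.card = 2 ∧ ∀ i, i < m → lp i \ {c i} = S

theorem avoid {m : ℕ} (l lp : ℕ → Finset ℕ) (hm : 3 ≤ m) (hodd : Odd m) (hg : Good m l)
    (hlp : ∀ i, i < m → 3 ≤ (lp i).card) :
    ∃ c, Pcyc m c ∧ Mem m l c ∧ ¬ BadPat m lp c := by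
  obtain ⟨c₁, c₂, p₁, m₁, p₂, m₂, i₀, hi₀, hne⟩ := two_colorings l hm hodd hg
  by_cases b₁ : BadPat m lp c₁
  · by_cases b₂ : BadPat m lp c₂
    · exfalso
      obtain ⟨S₁, hS₁c, hS₁⟩ := b₁
      obtain ⟨S₂, hS₂c, hS₂⟩ := b₂
      have hmemlp : ∀ (c : ℕ → ℕ) (S : Finset ℕ), S.card = 2 →
          (∀ i, i < m → lp i \ {c i} = S) → ∀ i, i < m → c i ∈ lp i ∧ c i ∉ S ∧
          lp i = insert (c i) S := by
        intro c S hSc hS i hi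
        have hmem : c i ∈ lp i := by
          by_contra hno
          have : lp i \ {c i} = lp i :=
            Finset.sdiff_eq_self_of_disjoint (Finset.disjoint_singleton_right.mpr hno)
          rw [hS i hi] at this
          have h5 := hlp i hi
          rw [← this, hSc] at h5
          omega
        have hnotS : c i ∉ S := by
          rw [← hS i hi]
          simp
        refine ⟨hmem, hnotS, ?_⟩
        apply Finset.eq_of_subset_of_card_le
        · intro x hx
          by_cases he : x = c i
          · rw [he]; exact Finset.mem_insert_self _ _
          · apply Finset.mem_insert_of_mem
            rw [← hS i hi, Finset.mem_sdiff, Finset.mem_singleton]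
            exact ⟨hx, he⟩
        · have h1 : (insert (c i) S).card ≤ S.card + 1 := Finset.card_insert_le _ _
          have := hlp i hi
          omega
      rcases eq_or_ne S₁ S₂ with hSe | hSne
      · apply hne
        subst hSe
        obtain ⟨hm1, hn1, he1⟩ := hmemlp c₁ S₁ hS₁c hS₁ i₀ hi₀
        obtain ⟨hm2, hn2, he2⟩ := hmemlp c₂ S₁ hS₂c hS₂ i₀ hi₀
        have : c₁ i₀ ∈ insert (c₂ i₀) S₁ := by rw [← he2, he1]; exact Finset.mem_insert_self _ _
        rw [Finset.mem_insert] at this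
        rcases this with h | h
        · exact h
        · exact absurd h hn1
      · -- S₁ ≠ S₂ : c₁ is constant, contradicting properness
        have hx : ∃ x, x ∈ S₂ ∧ x ∉ S₁ := by
          by_contra hno
          push_neg at hno
          exact hSne (Finset.eq_of_subset_of_card_le hno (by omega)).symm
        obtain ⟨x, hxS₂, hxS₁⟩ := hx
        have hconst : ∀ i, i < m → c₁ i = x := by
          intro i hi
          have h2 : x ∈ lp i := by
            rw [← hS₂ i hi] at hxS₂
            exact (Finset.mem_sdiff.mp hxS₂).1
          have h1 : x ∉ lp i \ {c₁ i} := by rw [hS₁ i hi]; exact hxS₁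
          rw [Finset.mem_sdiff, Finset.mem_singleton] at h1
          push_neg at h1
          exact (h1 h2).symm
        have h0 := p₁ 0 (by omega)
        rw [Nat.mod_eq_of_lt (by omega : (0:ℕ)+1 < m)] at h0
        exact h0 ((hconst 0 (by omega)).trans (hconst 1 (by omega)).symm)
    · exact ⟨c₂, p₂, m₂, b₂⟩
  · exact ⟨c₁, p₁, m₁, b₁⟩

theorem good_of_three {m : ℕ} (l : ℕ → Finset ℕ) (hm : 3 ≤ m)
    (hl : ∀ i, i < m → 3 ≤ (l i).card) : Good m l := by
  refine ⟨fun i hi => by have := hl i hi; omega, ?_⟩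
  rintro ⟨S, hSc, hS⟩
  have := hl 0 (by omega)
  rw [hS 0 (by omega)] at this
  omega

theorem not_badpat_good {m : ℕ} (lp : ℕ → Finset ℕ) (c : ℕ → ℕ)
    (hlp : ∀ i, i < m → 3 ≤ (lp i).card) (hnb : ¬ BadPat m lp c) :
    Good m (fun i => lp i \ {c i}) := by
  constructor
  · intro i hi
    show 2 ≤ (lp i \ {c i}).card
    have h1 := Finset.le_card_sdiff ({c i}) (lp i)
    have := hlp i hi
    simp only [Finset.card_singleton] at h1
    omega
  · rintro ⟨S, hSc, hS⟩
    exact hnb ⟨S, hSc, hS⟩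

noncomputable def rows (m : ℕ) (L : ℕ → ℕ → Finset ℕ) : ℕ → ℕ → ℕ
  | 0 => if h : ∃ c, Pcyc m c ∧ Mem m (L 0) c ∧ ¬BadPat m (L 1) c then h.choose else fun _ => 0
  | (j+1) =>
      if h : ∃ c, Pcyc m c ∧ Mem m (fun i => L (j+1) i \ {rows m L j i}) c ∧
          ¬BadPat m (L (j+2)) c then h.choose else fun _ => 0

theorem rows_spec {m : ℕ} (L : ℕ → ℕ → Finset ℕ) (hm : 3 ≤ m) (hodd : Odd m)
    (hL : ∀ j i, i < m → 3 ≤ (L j i).card) : ∀ j,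
    Pcyc m (rows m L j) ∧ ¬ BadPat m (L (j+1)) (rows m L j) ∧
    (∀ i, i < m → rows m L j i ∈ L j i) ∧
    (∀ i, i < m → j ≠ 0 → rows m L j i ≠ rows m L (j-1) i) := by
  intro j
  induction j with
  | zero =>
    have hex : ∃ c, Pcyc m c ∧ Mem m (L 0) c ∧ ¬BadPat m (L 1) c :=
      avoid (L 0) (L 1) hm hodd (good_of_three (L 0) hm (hL 0)) (hL 1)
    have hr : rows m L 0 = hex.choose := by rw [rows, dif_pos hex]
    obtain ⟨h1, h2, h3⟩ := hex.choose_spec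
    rw [hr]
    exact ⟨h1, h3, h2, fun _ _ h => absurd rfl h⟩
  | succ j ih =>
    have hgood : Good m (fun i => L (j+1) i \ {rows m L j i}) :=
      not_badpat_good (L (j+1)) (rows m L j) (hL (j+1)) ih.2.1
    have hex : ∃ c, Pcyc m c ∧ Mem m (fun i => L (j+1) i \ {rows m L j i}) c ∧
        ¬BadPat m (L (j+2)) c :=
      avoid _ (L (j+2)) hm hodd hgood (hL (j+2))
    have hr : rows m L (j+1) = hex.choose := by rw [rows, dif_pos hex]
    obtain ⟨h1, h2, h3⟩ := hex.choose_spec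
    rw [hr]
    refine ⟨h1, h3, ?_, ?_⟩
    · intro i hi
      have := h2 i hi
      simp only [Finset.mem_sdiff] at this
      exact this.1
    · intro i hi _
      have := h2 i hi
      simp only [Finset.mem_sdiff, Finset.mem_singleton] at this
      simpa using this.2

theorem product_coloring (m : ℕ) (hm : 3 ≤ m) (hodd : Odd m) (L : ℕ → ℕ → Finset ℕ)
    (hL : ∀ j i, i < m → 3 ≤ (L j i).card) :
    ∃ c : ℕ → ℕ → ℕ, (∀ j, Pcyc m (c j)) ∧ (∀ j i, i < m → c j i ∈ L j i) ∧
      (∀ j i, i < m → c (j+1) i ≠ c j i) := by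
  refine ⟨rows m L, fun j => (rows_spec L hm hodd hL j).1,
    fun j => (rows_spec L hm hodd hL j).2.2.1, fun j i hi => ?_⟩
  have := (rows_spec L hm hodd hL (j+1)).2.2.2 i hi (by omega)
  simpa using this

end ATCore

section Helpers

open SimpleGraph
open Fin.CommRing

theorem cyc_adj_val {m : ℕ} (hm : 3 ≤ m) {u v : Fin m} (h : (cycleGraph m).Adj u v) :
    v.val = (u.val + 1) % m ∨ u.val = (v.val + 1) % m := by
  rw [cycleGraph_adj'] at h
  have hu := u.isLt
  have hv := v.isLt
  have key : ∀ a b : Fin m, (a - b).val = 1 → a.val = (b.val + 1) % m := by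
    intro a b hab
    rw [Fin.sub_def] at hab
    simp only [] at hab
    have ha := a.isLt
    have hb := b.isLt
    set q := m - b.val + a.val with hq
    have hq2 : q < 2 * m := by omega
    have hqm : q % m = 1 := hab
    have hqe : q = 1 ∨ q = m + 1 := by
      rcases Nat.lt_or_ge q m with h1 | h1
      · left; rwa [Nat.mod_eq_of_lt h1] at hqm
      · right
        rw [Nat.mod_eq_sub_mod h1, Nat.mod_eq_of_lt (by omega)] at hqm
        omega
    rcases hqe with h1 | h1
    · have hb1 : b.val = m - 1 := by omega
      have ha0 : a.val = 0 := by omega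
      rw [ha0, hb1, (by omega : m - 1 + 1 = m), Nat.mod_self]
    · have he : a.val = b.val + 1 := by omega
      rw [he, Nat.mod_eq_of_lt (by omega)]
  rcases h with h | h
  · right; exact key u v h
  · left; exact key v u h

theorem cyc_adj_succ {k : ℕ} (hk : 1 ≤ k) (j : Fin (2*k+1)) :
    (cycleGraph (2*k+1)).Adj j (j+1) := by
  rw [cycleGraph_adj']
  right
  have h1 : j + 1 - j = 1 := by ring
  rw [h1, Fin.val_one', Nat.mod_eq_of_lt (by omega)]

/-- a walk of length `d` going around the cycle -/
noncomputable def cycAux (k : ℕ) (hk : 1 ≤ k) :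
    (d : ℕ) → (j : Fin (2*k+1)) → ((cycleGraph (2*k+1)).Walk j (j + d))
  | 0, j => SimpleGraph.Walk.nil.copy rfl (by simp)
  | (d+1), j => (SimpleGraph.Walk.cons (cyc_adj_succ hk j)
      (cycAux k hk d (j+1))).copy rfl (by push_cast; ring)

theorem cycAux_length (k : ℕ) (hk : 1 ≤ k) (d : ℕ) (j : Fin (2*k+1)) :
    (cycAux k hk d j).length = d := by
  induction d generalizing j with
  | zero => simp [cycAux]
  | succ d ih => simp [cycAux, ih]

noncomputable def cycWalk (k : ℕ) (hk : 1 ≤ k) : (cycleGraph (2*k+1)).Walk 0 0 :=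
  (cycAux k hk (2*k+1) 0).copy rfl (by simp)

theorem cycWalk_length (k : ℕ) (hk : 1 ≤ k) : (cycWalk k hk).length = 2*k+1 := by
  simp [cycWalk, cycAux_length]

theorem three_le_chrom (k n : ℕ) (hk : 1 ≤ k) (hn : 1 ≤ n) :
    3 ≤ (cycleGraph (2*k+1) □ pathGraph n).chromaticNumber := by
  have b : Fin n := ⟨0, by omega⟩
  apply SimpleGraph.Walk.three_le_chromaticNumber_of_odd_loop
    ((cycWalk k hk).map (SimpleGraph.boxProdLeft (cycleGraph (2*k+1)) (pathGraph n) b).toHom)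
  rw [SimpleGraph.Walk.length_map, cycWalk_length]
  exact ⟨k, by ring⟩

theorem choosable_three (k n : ℕ) (hk : 1 ≤ k) :
    IsKChoosable (cycleGraph (2*k+1) □ pathGraph n) 3 := by
  intro L hL
  have hm : 3 ≤ 2*k+1 := by omega
  obtain ⟨c, hp, hmem, hcross⟩ := ATCore.product_coloring (2*k+1) hm ⟨k, by omega⟩
    (fun j i => if h : i < 2*k+1 ∧ j < n then L (⟨i, h.1⟩, ⟨j, h.2⟩) else {0,1,2})
    (by
      intro j i hi
      by_cases h : i < 2*k+1 ∧ j < n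
      · rw [dif_pos h]
        exact hL _
      · rw [dif_neg h]
        decide)
  refine ⟨fun v => c v.2.val v.1.val, ?_, ?_⟩
  · rintro ⟨⟨i, hi⟩, ⟨j, hj⟩⟩
    have h := hmem j i hi
    rwa [dif_pos ⟨hi, hj⟩] at h
  · rintro ⟨ui, uj⟩ ⟨vi, vj⟩ hadj
    rw [SimpleGraph.boxProd_adj] at hadj
    simp only [] at hadj
    rcases hadj with ⟨hc, hj⟩ | ⟨hpath, hi⟩
    · -- cycle edge, same path coordinate
      rw [hj]
      rcases cyc_adj_val hm hc with hval | hval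
      · show c vj.val ui.val ≠ c vj.val vi.val
        rw [hval]
        exact hp vj.val ui.val ui.isLt
      · show c vj.val ui.val ≠ c vj.val vi.val
        rw [hval]
        exact (hp vj.val vi.val vi.isLt).symm
    · -- path edge, same cycle coordinate
      rw [hi]
      rw [SimpleGraph.pathGraph_adj] at hpath
      rcases hpath with h | h
      · show c uj.val vi.val ≠ c vj.val vi.val
        rw [← h]
        exact (hcross uj.val vi.val vi.isLt).symm
      · show c uj.val vi.val ≠ c vj.val vi.val
        rw [← h]
        exact hcross vj.val vi.val vi.isLt

end Helpers

/-- Main theorem -/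
theorem listChromaticNumber_oddCycle_boxProd_path (k n : ℕ) (hk : 1 ≤ k) (hn : 1 ≤ n) :
    listChromaticNumber (cycleGraph (2 * k + 1) □ pathGraph n) = 3 ∧
    (cycleGraph (2 * k + 1) □ pathGraph n).chromaticNumber =
      (listChromaticNumber (cycleGraph (2 * k + 1) □ pathGraph n) : ℕ∞) := by
  have hch3 := choosable_three k n hk
  have hlow := three_le_chrom k n hk hn
  set G := cycleGraph (2*k+1) □ pathGraph n with hG
  have hnot2 : ¬ IsKChoosable G 2 := by
    intro h2
    obtain ⟨f, hfm, hfa⟩ := h2 (fun _ => {0,1}) (by intro v; show _ ≤ (({0,1} : Finset ℕ)).card; decide)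
    have hlt : ∀ v, f v < 2 := by
      intro v
      have := hfm v
      simp at this
      omega
    have hcol : G.Colorable 2 := by
      refine ⟨SimpleGraph.Coloring.mk (fun v => ⟨f v, hlt v⟩) ?_⟩
      intro u v hadj hEq
      rw [Fin.mk.injEq] at hEq
      exact hfa u v hadj hEq
    have hle := hcol.chromaticNumber_le
    have h32 := le_trans hlow hle
    norm_num at h32
  have hcol3 : G.Colorable 3 := by
    obtain ⟨f, hfm, hfa⟩ := hch3 (fun _ => {0,1,2}) (by intro v; show _ ≤ (({0,1,2} : Finset ℕ)).card; decide)
    have hlt : ∀ v, f v < 3 := by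
      intro v
      have := hfm v
      simp at this
      omega
    refine ⟨SimpleGraph.Coloring.mk (fun v => ⟨f v, hlt v⟩) ?_⟩
    intro u v hadj hEq
    rw [Fin.mk.injEq] at hEq
    exact hfa u v hadj hEq
  have hlist : listChromaticNumber G = 3 := by
    rw [listChromaticNumber]
    apply le_antisymm
    · exact Nat.sInf_le (show 3 ∈ {k | IsKChoosable G k} from hch3)
    · apply le_csInf ⟨3, by exact hch3⟩
      intro b hb
      by_contra hb3
      push_neg at hb3
      exact hnot2 (fun L hL => hb L (fun v => le_trans (by omega) (hL v)))
  refine ⟨hlist, ?_⟩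
  rw [hlist]
  apply le_antisymm
  · exact_mod_cast hcol3.chromaticNumber_le
  · exact_mod_cast hlow


end ATPaper
end

section
/- Let k ≥ 1 and n ≥ 2, let v_1, …, v_{2k+1} be the vertices of C_{2k+1} in cyclic order and w_1, …, w_n the vertices of P_n in path order, and let G = C_{2k+1} □ P_n. If L is a list assignment for G such that |L((v_1, w_1))| ≥ 3, |L((v_i, w_1))| ≥ 2 for every i with 2 ≤ i ≤ 2k+1, and |L((v_i, w_j))| ≥ 3 for every i and every j ≥ 2, then G is L-colorable. -/
open SimpleGraph Finset

attribute [local instance] Classical.propDecidable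

namespace ATPaper

variable {V : Type*} [Fintype V]

open scoped Fin.NatCast Fin.CommRing

variable {k : ℕ}

/-! ### Basic helpers -/

lemma card_sdiff_singleton_ge (A : Finset ℕ) (x : ℕ) : A.card ≤ (A \ {x}).card + 1 := by
  classical
  calc A.card ≤ (A \ {x} ∪ {x}).card := by
        apply Finset.card_le_card
        intro a ha
        by_cases h : a = x
        · simp [h]
        · simp [Finset.mem_union, Finset.mem_sdiff, ha, h]
      _ ≤ (A \ {x}).card + ({x} : Finset ℕ).card := Finset.card_union_le _ _
      _ = (A \ {x}).card + 1 := by simp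

lemma nonempty_sdiff_singleton {A : Finset ℕ} {x : ℕ} (h : 2 ≤ A.card) :
    (A \ {x}).Nonempty := by
  rw [← Finset.card_pos]
  have := card_sdiff_singleton_ge A x
  omega

lemma two_le_card_sdiff_singleton {A : Finset ℕ} {x : ℕ} (h : 3 ≤ A.card) :
    2 ≤ (A \ {x}).card := by
  have := card_sdiff_singleton_ge A x
  omega

noncomputable def pick (S : Finset ℕ) : ℕ :=
  if h : S.Nonempty then h.choose else 0

lemma pick_mem {S : Finset ℕ} (h : S.Nonempty) : pick S ∈ S := by
  rw [pick, dif_pos h]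
  exact h.choose_spec

/-- Greedy sequence of colors -/
noncomputable def gr (K : ℕ → Finset ℕ) (x : ℕ) : ℕ → ℕ
  | 0 => x
  | t + 1 => pick (K (t + 1) \ {gr K x t})

lemma gr_succ {K : ℕ → Finset ℕ} {x : ℕ} {t : ℕ} (h : 2 ≤ (K (t + 1)).card) :
    gr K x (t + 1) ∈ K (t + 1) ∧ gr K x (t + 1) ≠ gr K x t := by
  have hne : (K (t + 1) \ {gr K x t}).Nonempty := nonempty_sdiff_singleton h
  have := pick_mem hne
  rw [Finset.mem_sdiff, Finset.mem_singleton] at this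
  exact ⟨by rw [gr]; exact this.1, by rw [gr]; exact this.2⟩

/-! ### Cycle coloring: greedy around the cycle -/

variable {k : ℕ}

/-- proper coloring of the (2k+1)-cycle -/
def PC (g : Fin (2 * k + 1) → ℕ) : Prop := ∀ i, g i ≠ g (i + 1)

lemma neg_one_eq_last : (-1 : Fin (2 * k + 1)) = Fin.last (2 * k) :=
  (eq_neg_of_add_eq_zero_left (Fin.last_add_one (2 * k))).symm

lemma neg_one_val : (-1 : Fin (2 * k + 1)).val = 2 * k := by
  rw [neg_one_eq_last]; rfl

lemma greedy0 (hk : 1 ≤ k) (K : Fin (2 * k + 1) → Finset ℕ) (x : ℕ) (hx : x ∈ K 0)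
    (h2 : ∀ i, i ≠ 0 → 2 ≤ (K i).card) (hlast : 2 ≤ ((K (-1)) \ {x}).card) :
    ∃ g : Fin (2 * k + 1) → ℕ, g 0 = x ∧ (∀ i, g i ∈ K i) ∧ PC g := by
  classical
  let K' : ℕ → Finset ℕ := fun t => if t = 2 * k then K (-1) \ {x} else K ((t : Fin (2 * k + 1)))
  have hK'eq : ∀ t, K' t = if t = 2 * k then K (-1) \ {x} else K ((t : Fin (2 * k + 1))) :=
    fun t => rfl
  let h : ℕ → ℕ := gr K' x
  have hh : ∀ t, h t = gr K' x t := fun t => rfl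
  have hcard : ∀ t, t + 1 ≤ 2 * k → 2 ≤ (K' (t + 1)).card := by
    intro t ht
    rw [hK'eq]
    by_cases he : t + 1 = 2 * k
    · rw [if_pos he]; exact hlast
    · rw [if_neg he]
      apply h2
      intro h0
      have hv : ((t + 1 : ℕ) : Fin (2 * k + 1)).val = t + 1 := Fin.val_cast_of_lt (by omega)
      rw [h0] at hv
      simp at hv
  have hstep : ∀ t, t + 1 ≤ 2 * k → h (t + 1) ∈ K' (t + 1) ∧ h (t + 1) ≠ h t :=
    fun t ht => gr_succ (hcard t ht)
  have hmem : ∀ i : Fin (2 * k + 1), h i.val ∈ K i := by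
    intro i
    rcases Nat.eq_zero_or_pos i.val with h0 | hpos
    · have hi0 : i = 0 := by ext; simpa using h0
      rw [hi0]
      have : h 0 = x := rfl
      simp only [Fin.val_zero, this]
      exact hx
    · obtain ⟨t, ht⟩ : ∃ t, i.val = t + 1 := ⟨i.val - 1, by omega⟩
      have hle : t + 1 ≤ 2 * k := by have := i.isLt; omega
      have hKmem := (hstep t hle).1
      rw [hK'eq] at hKmem
      by_cases he : t + 1 = 2 * k
      · have hi : i = -1 := by
          ext
          rw [neg_one_val]
          omega
        rw [ht, hi]
        rw [if_pos he] at hKmem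
        simp only [Finset.mem_sdiff] at hKmem
        exact hKmem.1
      · rw [if_neg he] at hKmem
        have hcast : ((t + 1 : ℕ) : Fin (2 * k + 1)) = i := by
          rw [← ht]
          exact Fin.cast_val_eq_self i
        rw [ht, ← hcast]
        exact hKmem
  refine ⟨fun i => h i.val, by simp only [Fin.val_zero]; rfl, hmem, ?_⟩
  intro i
  show h i.val ≠ h (i + 1).val
  by_cases hi : i.val = 2 * k
  · have hip1 : i + 1 = 0 := by
      have hieq : i = -1 := by ext; rw [neg_one_val]; omega
      rw [hieq]; ring
    have hM2 : 2 * k = (2 * k - 1) + 1 := by omega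
    have hKmem := (hstep (2 * k - 1) (by omega)).1
    rw [hK'eq, if_pos (by omega : 2 * k - 1 + 1 = 2 * k)] at hKmem
    simp only [Finset.mem_sdiff, Finset.mem_singleton] at hKmem
    rw [hip1, hi, hM2]
    have h0x : h 0 = x := rfl
    simpa [h0x] using hKmem.2
  · have hlt : i.val < 2 * k := by have := i.isLt; omega
    have hv : (i + 1).val = i.val + 1 := by
      rw [Fin.val_add_one]
      have hne : i ≠ Fin.last (2 * k) := by
        intro h; rw [h] at hi; exact hi rfl
      rw [if_neg hne]
    rw [hv]
    exact fun hcontra => (hstep i.val (by omega)).2 hcontra.symm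

lemma greedy_rot (hk : 1 ≤ k) (R : Fin (2 * k + 1) → Finset ℕ) (s : Fin (2 * k + 1)) (x : ℕ)
    (hx : x ∈ R s) (h2 : ∀ i, i ≠ s → 2 ≤ (R i).card)
    (hlast : 2 ≤ ((R (s - 1)) \ {x}).card) :
    ∃ g : Fin (2 * k + 1) → ℕ, g s = x ∧ (∀ i, g i ∈ R i) ∧ PC g := by
  obtain ⟨g0, hg0, hg0mem, hg0pc⟩ :=
    greedy0 hk (fun i => R (i + s)) x (by simpa using hx)
      (fun i hi => h2 (i + s) (fun hc => hi (by
        have : i + s - s = s - s := by rw [hc]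
        simpa using this)))
      (by
        have : (-1 : Fin (2 * k + 1)) + s = s - 1 := by ring
        simpa [this] using hlast)
  refine ⟨fun i => g0 (i - s), by simpa using hg0, fun i => by simpa using hg0mem (i - s), ?_⟩
  intro i
  show g0 (i - s) ≠ g0 (i + 1 - s)
  have heq : i + 1 - s = (i - s) + 1 := by ring
  rw [heq]
  exact hg0pc (i - s)


/-! ### Existence of a coloring from good residual lists -/

lemma exists_coloring_of_good (hk : 1 ≤ k) (R : Fin (2 * k + 1) → Finset ℕ)
    (h2 : ∀ i, 2 ≤ (R i).card)
    (hgood : (∃ i, 3 ≤ (R i).card) ∨ (∃ i, R i ≠ R (i + 1))) :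
    ∃ g : Fin (2 * k + 1) → ℕ, (∀ i, g i ∈ R i) ∧ PC g := by
  classical
  by_cases hbig : ∃ i, 3 ≤ (R i).card
  · obtain ⟨i0, h3⟩ := hbig
    obtain ⟨x, hx⟩ : (R (i0 + 1)).Nonempty := Finset.card_pos.mp (by have := h2 (i0 + 1); omega)
    obtain ⟨g, _, hmem, hpc⟩ := greedy_rot hk R (i0 + 1) x hx (fun i _ => h2 i)
      (by
        have hs : i0 + 1 - 1 = i0 := by ring
        rw [hs]
        exact two_le_card_sdiff_singleton h3)
    exact ⟨g, hmem, hpc⟩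
  · push_neg at hbig
    obtain ⟨i0, hne⟩ : ∃ i, R i ≠ R (i + 1) := by
      rcases hgood with ⟨i, h3⟩ | h
      · exact absurd h3 (by have := hbig i; omega)
      · exact h
    have hcards : ∀ i, (R i).card = 2 := fun i => by have := hbig i; have := h2 i; omega
    obtain ⟨x, hx, hxn⟩ : ∃ x ∈ R (i0 + 1), x ∉ R i0 := by
      by_contra hcon
      push_neg at hcon
      exact hne (Finset.eq_of_subset_of_card_le (fun a ha => hcon a ha)
        (by rw [hcards, hcards]) ).symm
    obtain ⟨g, _, hmem, hpc⟩ := greedy_rot hk R (i0 + 1) x hx (fun i _ => h2 i)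
      (by
        have hs : i0 + 1 - 1 = i0 := by ring
        rw [hs]
        have hsd : R i0 \ {x} = R i0 := by
          apply Finset.sdiff_eq_self_of_disjoint
          simp [Finset.disjoint_singleton_right, hxn]
        rw [hsd, hcards])
    exact ⟨g, hmem, hpc⟩

/-! ### Segment flip: second coloring -/

lemma flipseg (hk : 1 ≤ k) (L : Fin (2 * k + 1) → Finset ℕ) (g : Fin (2 * k + 1) → ℕ)
    (hmem : ∀ i, g i ∈ L i)
    (hp : PC g) (s : Fin (2 * k + 1)) (d : ℕ) (hd : d + 3 ≤ 2 * k + 1)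
    (hF : ∀ e ≤ d, g ((s + (e : ℕ)) + 1) ∈ L (s + (e : ℕ)))
    (hT : g ((s + ((d + 1 : ℕ) : Fin (2 * k + 1))) - 1) ∈ L (s + ((d + 1 : ℕ) : Fin (2 * k + 1))))
    (hTne : g ((s + ((d + 1 : ℕ) : Fin (2 * k + 1))) - 1) ≠
            g ((s + ((d + 1 : ℕ) : Fin (2 * k + 1))) + 1))
    (hseam : g (s + 1) ≠ g (s - 1)) :
    ∃ g' : Fin (2 * k + 1) → ℕ, g' ≠ g ∧ (∀ i, g' i ∈ L i) ∧ PC g' := by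
  classical
  set t : Fin (2 * k + 1) := s + ((d + 1 : ℕ) : Fin (2 * k + 1)) with hts
  let g' : Fin (2 * k + 1) → ℕ := fun j =>
    if (j - s).val ≤ d then g (j + 1) else if (j - s).val = d + 1 then g (j - 1) else g j
  have hg'eq : ∀ j, g' j =
      if (j - s).val ≤ d then g (j + 1) else if (j - s).val = d + 1 then g (j - 1) else g j :=
    fun j => rfl
  have hjrec : ∀ j : Fin (2 * k + 1), j = s + (((j - s).val : ℕ) : Fin (2 * k + 1)) := by
    intro j
    rw [Fin.cast_val_eq_self (j - s)]
    ring
  have hsucc : ∀ j : Fin (2 * k + 1), (j - s).val < 2 * k → (j + 1 - s).val = (j - s).val + 1 := by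
    intro j hlt
    have heq : j + 1 - s = (j - s) + 1 := by ring
    rw [heq, Fin.val_add_one]
    have hne : j - s ≠ Fin.last (2 * k) := by
      intro hcon
      rw [hcon] at hlt
      simp [Fin.last] at hlt
    rw [if_neg hne]
  have htofe : ∀ j : Fin (2 * k + 1), (j - s).val = d + 1 → j = t := by
    intro j hj
    rw [hts, ← hj, Fin.cast_val_eq_self (j - s)]
    ring
  refine ⟨g', ?_, ?_, ?_⟩
  · -- differs at s
    intro hcon
    have hcs := congrFun hcon s
    rw [hg'eq] at hcs
    have hz : (s - s).val = 0 := by simp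
    rw [if_pos (by omega : (s - s).val ≤ d)] at hcs
    exact hp s hcs.symm
  · -- membership
    intro j
    rw [hg'eq]
    by_cases h1 : (j - s).val ≤ d
    · rw [if_pos h1]
      have := hF (j - s).val h1
      rwa [← hjrec j] at this
    · rw [if_neg h1]
      by_cases h2 : (j - s).val = d + 1
      · rw [if_pos h2, htofe j h2]
        exact hT
      · rw [if_neg h2]
        exact hmem j
  · -- properness
    intro j
    rw [hg'eq j, hg'eq (j + 1)]
    have hjlt := (j - s).isLt
    by_cases h1 : (j - s).val ≤ d
    · -- j in F-flipped part
      rw [if_pos h1]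
      have hv : (j + 1 - s).val = (j - s).val + 1 := hsucc j (by omega)
      by_cases h1' : (j - s).val + 1 ≤ d
      · rw [if_pos (by omega : (j + 1 - s).val ≤ d)]
        exact hp (j + 1)
      · -- (j+1) is the t vertex
        have hveq : (j + 1 - s).val = d + 1 := by omega
        rw [if_neg (by omega : ¬ (j + 1 - s).val ≤ d), if_pos hveq]
        have heq1 : j + 1 - 1 = j := by ring
        rw [heq1]
        exact (hp j).symm
    · rw [if_neg h1]
      by_cases h2 : (j - s).val = d + 1
      · -- j = t
        rw [if_pos h2]
        have hv : (j + 1 - s).val = (j - s).val + 1 := hsucc j (by omega)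
        rw [if_neg (by omega : ¬ (j + 1 - s).val ≤ d),
            if_neg (by omega : ¬ (j + 1 - s).val = d + 1)]
        have hj : j = t := htofe j h2
        rw [hj]
        exact hTne
      · -- j unflipped
        rw [if_neg h2]
        by_cases h3 : (j - s).val = 2 * k
        · -- j = s - 1, j + 1 = s
          have hA : j - s = (((j - s).val : ℕ) : Fin (2 * k + 1)) :=
            (Fin.cast_val_eq_self _).symm
          rw [h3] at hA
          have h2k : ((2 * k : ℕ) : Fin (2 * k + 1)) = -1 := by
            have h0 : ((2 * k + 1 : ℕ) : Fin (2 * k + 1)) = 0 := Fin.natCast_self (2 * k + 1)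
            push_cast at h0 ⊢
            linear_combination h0
          have hje : j = s - 1 := by linear_combination hA.trans h2k
          have hjs : j + 1 = s := by rw [hje]; ring
          have hz : (j + 1 - s).val = 0 := by rw [hjs]; simp
          rw [if_pos (by omega : (j + 1 - s).val ≤ d)]
          rw [hjs, hje]
          exact fun hc => hseam hc.symm
        · have hv : (j + 1 - s).val = (j - s).val + 1 := hsucc j (by omega)
          rw [if_neg (by omega : ¬ (j + 1 - s).val ≤ d),
              if_neg (by omega : ¬ (j + 1 - s).val = d + 1)]
          exact hp j


/-! ### Every cycle coloring from 2-lists admits a second coloring -/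

lemma val_cast_lt {a : ℕ} (h : a < 2 * k + 1) : ((a : ℕ) : Fin (2 * k + 1)).val = a :=
  Fin.val_cast_of_lt h

lemma cast_2k_eq_neg_one : ((2 * k : ℕ) : Fin (2 * k + 1)) = -1 := by
  have h0 : ((2 * k + 1 : ℕ) : Fin (2 * k + 1)) = 0 := Fin.natCast_self (2 * k + 1)
  push_cast at h0 ⊢
  linear_combination h0

lemma sub_ne_self (hk : 1 ≤ k) (i : Fin (2 * k + 1)) : i - 1 ≠ i := by
  intro h
  have : (1 : Fin (2 * k + 1)) = 0 := by linear_combination -h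
  have hv := congrArg Fin.val this
  rw [Fin.val_zero, Fin.val_one'] at hv
  rw [Nat.mod_eq_of_lt (by omega)] at hv
  omega

lemma add_one_ne_self (hk : 1 ≤ k) (i : Fin (2 * k + 1)) : i + 1 ≠ i := by
  intro h
  have : (1 : Fin (2 * k + 1)) = 0 := by linear_combination h
  have hv := congrArg Fin.val this
  rw [Fin.val_zero, Fin.val_one'] at hv
  rw [Nat.mod_eq_of_lt (by omega)] at hv
  omega

lemma second_coloring (hk : 1 ≤ k) (L : Fin (2 * k + 1) → Finset ℕ)
    (h2 : ∀ i, 2 ≤ (L i).card) (g : Fin (2 * k + 1) → ℕ)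
    (hmem : ∀ i, g i ∈ L i) (hp : PC g) :
    ∃ g' : Fin (2 * k + 1) → ℕ, g' ≠ g ∧ (∀ i, g' i ∈ L i) ∧ PC g' := by
  classical
  by_cases hc1 : ∃ i, ∃ c ∈ L i, c ≠ g (i - 1) ∧ c ≠ g i ∧ c ≠ g (i + 1)
  · -- single flip
    obtain ⟨i0, c, hcL, hc1', hc2', hc3'⟩ := hc1
    refine ⟨Function.update g i0 c, ?_, ?_, ?_⟩
    · intro hcon
      have := congrFun hcon i0
      rw [Function.update_self] at this
      exact hc2' this
    · intro j
      by_cases hj : j = i0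
      · rw [hj, Function.update_self]; exact hcL
      · rw [Function.update_of_ne hj]; exact hmem j
    · intro j
      by_cases hj : j = i0
      · rw [hj, Function.update_self, Function.update_of_ne (add_one_ne_self hk i0)]
        exact hc3'
      · rw [Function.update_of_ne hj]
        by_cases hj1 : j + 1 = i0
        · rw [hj1, Function.update_self]
          have hji : j = i0 - 1 := by linear_combination hj1
          rw [hji]
          exact fun h => hc1' h.symm
        · rw [Function.update_of_ne hj1]
          exact hp j
  · push_neg at hc1
    have hc2 : ∀ i, ∀ c ∈ L i, c = g (i - 1) ∨ c = g i ∨ c = g (i + 1) := by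
      intro i c hc
      by_contra hcon
      push_neg at hcon
      exact hcon.2.2 (hc1 i c hc hcon.1 hcon.2.1)
    have hother : ∀ i, ∃ c ∈ L i, c ≠ g i := by
      intro i
      obtain ⟨c, hc⟩ := nonempty_sdiff_singleton (x := g i) (h2 i)
      rw [Finset.mem_sdiff, Finset.mem_singleton] at hc
      exact ⟨c, hc.1, hc.2⟩
    have hnotF : ∀ j, g (j + 1) ∉ L j → g (j - 1) ∈ L j ∧ g (j - 1) ≠ g (j + 1) := by
      intro j hnf
      obtain ⟨c, hcL, hcne⟩ := hother j
      rcases hc2 j c hcL with h | h | h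
      · rw [← h]
        exact ⟨hcL, fun he => hnf (he ▸ hcL)⟩
      · exact absurd h hcne
      · exact absurd (h ▸ hcL) hnf
    by_cases hFall : ∀ i, g (i + 1) ∈ L i
    · -- shift
      refine ⟨fun i => g (i + 1), ?_, fun i => hFall i, fun i => hp (i + 1)⟩
      intro hcon
      exact hp 0 (congrFun hcon 0).symm
    by_cases hBall : ∀ i, g (i - 1) ∈ L i
    · -- backshift
      refine ⟨fun i => g (i - 1), ?_, fun i => hBall i, ?_⟩
      · intro hcon
        have := congrFun hcon 0
        have h01 : (0 : Fin (2 * k + 1)) - 1 + 1 = 0 := by ring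
        exact hp ((0 : Fin (2 * k + 1)) - 1) (by rw [h01]; exact this)
      · intro i
        show g (i - 1) ≠ g (i + 1 - 1)
        have heq : i + 1 - 1 = (i - 1) + 1 := by ring
        rw [heq]
        exact hp (i - 1)
    push_neg at hFall hBall
    obtain ⟨p, hpnF⟩ := hFall
    obtain ⟨q, hqnB⟩ := hBall
    have hFq : g (q + 1) ∈ L q ∧ g (q + 1) ≠ g (q - 1) := by
      obtain ⟨c, hcL, hcne⟩ := hother q
      rcases hc2 q c hcL with h | h | h
      · exact absurd (h ▸ hcL) hqnB
      · exact absurd h hcne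
      · rw [← h]
        exact ⟨hcL, fun he => hqnB (he ▸ hcL)⟩
    -- find the first non-F vertex after q
    have hpq : p ≠ q := by
      intro h
      rw [h] at hpnF
      exact hpnF hFq.1
    have hval : 1 ≤ (p - q).val := by
      rcases Nat.eq_zero_or_pos (p - q).val with h0 | h1
      · exfalso
        apply hpq
        have hz0 : p - q = 0 := by ext; simpa using h0
        linear_combination hz0
      · exact h1
    have hwit : g ((q + (((p - q).val - 1 + 1 : ℕ) : Fin (2 * k + 1))) + 1) ∉
        L (q + (((p - q).val - 1 + 1 : ℕ) : Fin (2 * k + 1))) := by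
      have hcast : (((p - q).val - 1 + 1 : ℕ) : Fin (2 * k + 1)) = p - q := by
        have he : (p - q).val - 1 + 1 = (p - q).val := by omega
        rw [he]
        exact Fin.cast_val_eq_self _
      rw [hcast]
      have hqp : q + (p - q) = p := by ring
      rw [hqp]
      exact hpnF
    have hPex : ∃ e : ℕ, g ((q + ((e + 1 : ℕ) : Fin (2 * k + 1))) + 1) ∉
        L (q + ((e + 1 : ℕ) : Fin (2 * k + 1))) := ⟨(p - q).val - 1, hwit⟩
    set d0 := Nat.find hPex with hd0
    have hP0 : g ((q + ((d0 + 1 : ℕ) : Fin (2 * k + 1))) + 1) ∉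
        L (q + ((d0 + 1 : ℕ) : Fin (2 * k + 1))) := Nat.find_spec hPex
    have hmin : ∀ e, e < d0 → g ((q + ((e + 1 : ℕ) : Fin (2 * k + 1))) + 1) ∈
        L (q + ((e + 1 : ℕ) : Fin (2 * k + 1))) := by
      intro e he
      have hnm := Nat.find_min hPex he
      by_contra hcon
      exact hnm hcon
    have hd0le : d0 ≤ 2 * k - 1 := by
      have h1 := Nat.find_min' hPex hwit
      have h2' := (p - q).isLt
      omega
    have hallFbelow : ∀ e ≤ d0, g ((q + ((e : ℕ) : Fin (2 * k + 1))) + 1) ∈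
        L (q + ((e : ℕ) : Fin (2 * k + 1))) := by
      intro e he
      match e with
      | 0 => simpa using hFq.1
      | e' + 1 => exact hmin e' (by omega)
    by_cases hcase : d0 ≤ 2 * k - 2
    · exact flipseg hk L g hmem hp q d0 (by omega) hallFbelow
        (hnotF _ hP0).1 (hnotF _ hP0).2 hFq.2
    · have hd0eq : d0 = 2 * k - 1 := by omega
      set z := q + ((2 * k : ℕ) : Fin (2 * k + 1)) with hz
      have hznF : g (z + 1) ∉ L z := by
        have hh := hP0
        rw [hd0eq] at hh
        have h2k1 : 2 * k - 1 + 1 = 2 * k := by omega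
        rw [h2k1] at hh
        exact hh
      have hallF : ∀ j, j ≠ z → g (j + 1) ∈ L j := by
        intro j hj
        have hjq : j = q + (((j - q).val : ℕ) : Fin (2 * k + 1)) := by
          rw [Fin.cast_val_eq_self]
          ring
        have helt : (j - q).val ≤ 2 * k := by have := (j - q).isLt; omega
        have hene : (j - q).val ≠ 2 * k := by
          intro hcon
          apply hj
          rw [hjq, hcon, hz]
        rw [hjq]
        exact hallFbelow (j - q).val (by omega)
      by_cases hpure : ∃ s', s' ≠ z ∧ s' ≠ z + 1 ∧ g (s' + 1) ≠ g (s' - 1)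
      · obtain ⟨s', hsz, hsz1, hseam'⟩ := hpure
        have hds1 : 1 ≤ (z - s').val := by
          rcases Nat.eq_zero_or_pos (z - s').val with h0 | h1
          · exfalso
            apply hsz
            have hz0 : z - s' = 0 := by ext; simpa using h0
            linear_combination -hz0
          · exact h1
        have hds2 : (z - s').val ≤ 2 * k - 1 := by
          have hlt := (z - s').isLt
          rcases Nat.lt_or_ge (z - s').val (2 * k) with h | h
          · omega
          · exfalso
            apply hsz1
            have hveq : (z - s').val = 2 * k := by omega
            have hA : z - s' = (((z - s').val : ℕ) : Fin (2 * k + 1)) :=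
              (Fin.cast_val_eq_self _).symm
            rw [hveq] at hA
            rw [cast_2k_eq_neg_one] at hA
            linear_combination -hA
        refine flipseg hk L g hmem hp s' ((z - s').val - 1) (by omega) ?_ ?_ ?_ hseam'
        · intro e he
          apply hallF
          intro hcon
          have hA : ((e : ℕ) : Fin (2 * k + 1)) = z - s' := by linear_combination hcon
          have hB := congrArg Fin.val hA
          rw [val_cast_lt (by omega)] at hB
          omega
        · have hteq : s' + (((z - s').val - 1 + 1 : ℕ) : Fin (2 * k + 1)) = z := by
            have he : (z - s').val - 1 + 1 = (z - s').val := by omega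
            rw [he, Fin.cast_val_eq_self]
            ring
          rw [hteq]
          exact (hnotF z hznF).1
        · have hteq : s' + (((z - s').val - 1 + 1 : ℕ) : Fin (2 * k + 1)) = z := by
            have he : (z - s').val - 1 + 1 = (z - s').val := by omega
            rw [he, Fin.cast_val_eq_self]
            ring
          rw [hteq]
          exact (hnotF z hznF).2
      · exfalso
        push_neg at hpure
        have hchain : ∀ e : ℕ, e ≤ k →
            g (z + 1 + ((2 * e : ℕ) : Fin (2 * k + 1))) = g (z + 1) := by
          intro e
          induction e with
          | zero => intro _; simp
          | succ e ih =>
            intro hek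
            have ihe := ih (by omega)
            have hs'z : z + 1 + ((2 * e + 1 : ℕ) : Fin (2 * k + 1)) ≠ z := by
              intro hcon
              have h1 : ((2 * e + 2 : ℕ) : Fin (2 * k + 1)) = 0 := by
                push_cast at hcon ⊢
                linear_combination hcon
              have hB := congrArg Fin.val h1
              rw [val_cast_lt (by omega)] at hB
              simp at hB
            have hs'z1 : z + 1 + ((2 * e + 1 : ℕ) : Fin (2 * k + 1)) ≠ z + 1 := by
              intro hcon
              have h1 : ((2 * e + 1 : ℕ) : Fin (2 * k + 1)) = 0 := by
                push_cast at hcon ⊢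
                linear_combination hcon
              have hB := congrArg Fin.val h1
              rw [val_cast_lt (by omega)] at hB
              simp at hB
            have heqq := hpure _ hs'z hs'z1
            have hA : z + 1 + ((2 * e + 1 : ℕ) : Fin (2 * k + 1)) + 1 =
                z + 1 + ((2 * (e + 1) : ℕ) : Fin (2 * k + 1)) := by
              push_cast
              ring
            have hB : z + 1 + ((2 * e + 1 : ℕ) : Fin (2 * k + 1)) - 1 =
                z + 1 + ((2 * e : ℕ) : Fin (2 * k + 1)) := by
              push_cast
              ring
            rw [hA, hB] at heqq
            exact heqq.trans ihe
        have hfinal := hchain k le_rfl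
        rw [cast_2k_eq_neg_one] at hfinal
        have hzz : z + 1 + (-1 : Fin (2 * k + 1)) = z := by ring
        rw [hzz] at hfinal
        exact hp z hfinal


/-! ### The key extension step -/

lemma key (hk : 1 ≤ k) (Lc : Fin (2 * k + 1) → Finset ℕ) (h3 : ∀ i, 3 ≤ (Lc i).card)
    (f f' : Fin (2 * k + 1) → ℕ) (hpf : PC f) (hpf' : PC f') (hne : f ≠ f') :
    ∃ b g g' : Fin (2 * k + 1) → ℕ, (b = f ∨ b = f') ∧ g ≠ g' ∧ PC g ∧ PC g' ∧
      (∀ i, g i ∈ Lc i ∧ g i ≠ b i) ∧ (∀ i, g' i ∈ Lc i ∧ g' i ≠ b i) := by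
  classical
  choose Lc' hsub hcard using fun i => Finset.exists_subset_card_eq (h3 i)
  set R : Fin (2 * k + 1) → Finset ℕ := fun i => Lc' i \ {f i} with hR
  set R' : Fin (2 * k + 1) → Finset ℕ := fun i => Lc' i \ {f' i} with hR'
  have hRe : ∀ i, R i = Lc' i \ {f i} := fun i => rfl
  have hR'e : ∀ i, R' i = Lc' i \ {f' i} := fun i => rfl
  have hR2 : ∀ i, 2 ≤ (R i).card := by
    intro i
    rw [hRe]
    exact two_le_card_sdiff_singleton (by rw [hcard])
  have hR'2 : ∀ i, 2 ≤ (R' i).card := by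
    intro i
    rw [hR'e]
    exact two_le_card_sdiff_singleton (by rw [hcard])
  have hgood : ((∃ i, 3 ≤ (R i).card) ∨ (∃ i, R i ≠ R (i + 1))) ∨
      ((∃ i, 3 ≤ (R' i).card) ∨ (∃ i, R' i ≠ R' (i + 1))) := by
    by_contra hcon
    push_neg at hcon
    obtain ⟨⟨hA1, hA2⟩, hB1, hB2⟩ := hcon
    -- both residual systems are constant 2-sets
    have hconstR : ∀ i, R i = R 0 := by
      have hnat : ∀ t : ℕ, R ((t : ℕ) : Fin (2 * k + 1)) = R 0 := by
        intro t
        induction t with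
        | zero => norm_num
        | succ t iht =>
          have hc : ((t + 1 : ℕ) : Fin (2 * k + 1)) = ((t : ℕ) : Fin (2 * k + 1)) + 1 := by
            push_cast; ring
          rw [hc, ← hA2 ((t : ℕ) : Fin (2 * k + 1))]
          exact iht
      intro i
      have := hnat i.val
      rwa [Fin.cast_val_eq_self] at this
    have hconstR' : ∀ i, R' i = R' 0 := by
      have hnat : ∀ t : ℕ, R' ((t : ℕ) : Fin (2 * k + 1)) = R' 0 := by
        intro t
        induction t with
        | zero => norm_num
        | succ t iht =>
          have hc : ((t + 1 : ℕ) : Fin (2 * k + 1)) = ((t : ℕ) : Fin (2 * k + 1)) + 1 := by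
            push_cast; ring
          rw [hc, ← hB2 ((t : ℕ) : Fin (2 * k + 1))]
          exact iht
      intro i
      have := hnat i.val
      rwa [Fin.cast_val_eq_self] at this
    have hstruct : ∀ i, f i ∈ Lc' i ∧ Lc' i = R 0 ∪ {f i} ∧ f i ∉ R 0 := by
      intro i
      have hfmem : f i ∈ Lc' i := by
        by_contra hfn
        have : R i = Lc' i := by
          rw [hRe]
          apply Finset.sdiff_eq_self_of_disjoint
          simp [Finset.disjoint_singleton_right, hfn]
        have hcd := hA1 i
        rw [this, hcard i] at hcd
        omega
      refine ⟨hfmem, ?_, ?_⟩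
      · rw [← hconstR i, hRe]
        rw [Finset.sdiff_union_of_subset (Finset.singleton_subset_iff.mpr hfmem)]
      · rw [← hconstR i, hRe]
        simp
    have hstruct' : ∀ i, f' i ∈ Lc' i ∧ Lc' i = R' 0 ∪ {f' i} ∧ f' i ∉ R' 0 := by
      intro i
      have hfmem : f' i ∈ Lc' i := by
        by_contra hfn
        have : R' i = Lc' i := by
          rw [hR'e]
          apply Finset.sdiff_eq_self_of_disjoint
          simp [Finset.disjoint_singleton_right, hfn]
        have hcd := hB1 i
        rw [this, hcard i] at hcd
        omega
      refine ⟨hfmem, ?_, ?_⟩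
      · rw [← hconstR' i, hR'e]
        rw [Finset.sdiff_union_of_subset (Finset.singleton_subset_iff.mpr hfmem)]
      · rw [← hconstR' i, hR'e]
        simp
    by_cases hPQ : R 0 = R' 0
    · apply hne
      funext i
      have h1 := (hstruct i).1
      have h2' := (hstruct i).2.2
      have h3' := (hstruct' i).2.1
      rw [h3', ← hPQ, Finset.mem_union, Finset.mem_singleton] at h1
      rcases h1 with h | h
      · exact absurd h h2'
      · exact h
    · -- get c ∈ R' 0 \ R 0, forcing f to be constant
      have hcR : ∃ c ∈ R' 0, c ∉ R 0 := by
        by_contra hcc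
        push_neg at hcc
        apply hPQ
        have hRc : (R 0).card = 2 := by have := hA1 0; have := hR2 0; omega
        have hR'c : (R' 0).card = 2 := by have := hB1 0; have := hR'2 0; omega
        exact (Finset.eq_of_subset_of_card_le (fun a ha => hcc a ha) (by omega)).symm
      obtain ⟨c, hcR', hcnR⟩ := hcR
      have hfc : ∀ i, f i = c := by
        intro i
        have hcL : c ∈ Lc' i := by
          rw [← hconstR' i, hR'e] at hcR'
          exact (Finset.mem_sdiff.mp hcR').1
        rw [(hstruct i).2.1, Finset.mem_union, Finset.mem_singleton] at hcL
        rcases hcL with h | h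
        · exact absurd h hcnR
        · exact h.symm
      exact hpf 0 ((hfc 0).trans (hfc (0 + 1)).symm)
  -- now extract colorings
  rcases hgood with hg | hg
  · obtain ⟨g, hgmem, hgpc⟩ := exists_coloring_of_good hk R hR2 hg
    obtain ⟨g', hgne, hg'mem, hg'pc⟩ := second_coloring hk R hR2 g hgmem hgpc
    refine ⟨f, g, g', Or.inl rfl, fun h => hgne h.symm, hgpc, hg'pc, ?_, ?_⟩
    · intro i
      have := hgmem i
      rw [hRe, Finset.mem_sdiff, Finset.mem_singleton] at this
      exact ⟨hsub i this.1, this.2⟩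
    · intro i
      have := hg'mem i
      rw [hRe, Finset.mem_sdiff, Finset.mem_singleton] at this
      exact ⟨hsub i this.1, this.2⟩
  · obtain ⟨g, hgmem, hgpc⟩ := exists_coloring_of_good hk R' hR'2 hg
    obtain ⟨g', hgne, hg'mem, hg'pc⟩ := second_coloring hk R' hR'2 g hgmem hgpc
    refine ⟨f', g, g', Or.inr rfl, fun h => hgne h.symm, hgpc, hg'pc, ?_, ?_⟩
    · intro i
      have := hgmem i
      rw [hR'e, Finset.mem_sdiff, Finset.mem_singleton] at this
      exact ⟨hsub i this.1, this.2⟩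
    · intro i
      have := hg'mem i
      rw [hR'e, Finset.mem_sdiff, Finset.mem_singleton] at this
      exact ⟨hsub i this.1, this.2⟩

/-! ### First column -/

lemma one_ne_zero' (hk : 1 ≤ k) : (1 : Fin (2 * k + 1)) ≠ 0 := by
  intro h
  have hv := congrArg Fin.val h
  rw [Fin.val_zero, Fin.val_one'] at hv
  rw [Nat.mod_eq_of_lt (by omega)] at hv
  omega

lemma firstcol (hk : 1 ≤ k) (L0 : Fin (2 * k + 1) → Finset ℕ)
    (h1 : 3 ≤ (L0 0).card) (h2 : ∀ i, i ≠ 0 → 2 ≤ (L0 i).card) :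
    ∃ g g' : Fin (2 * k + 1) → ℕ, g ≠ g' ∧ PC g ∧ PC g' ∧
      (∀ i, g i ∈ L0 i) ∧ (∀ i, g' i ∈ L0 i) := by
  classical
  obtain ⟨x, hx, y, hy, hxy⟩ := Finset.one_lt_card.mp
    (by have := h2 1 (one_ne_zero' hk); omega : 1 < (L0 1).card)
  have hlast : (1 : Fin (2 * k + 1)) - 1 = 0 := by ring
  have hcard2 : ∀ i, i ≠ (1 : Fin (2 * k + 1)) → 2 ≤ (L0 i).card := by
    intro i hi
    by_cases h0 : i = 0
    · rw [h0]; omega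
    · exact h2 i h0
  obtain ⟨g, hg1, hgmem, hgpc⟩ := greedy_rot hk L0 1 x hx hcard2
    (by rw [hlast]; exact two_le_card_sdiff_singleton h1)
  obtain ⟨g', hg'1, hg'mem, hg'pc⟩ := greedy_rot hk L0 1 y hy hcard2
    (by rw [hlast]; exact two_le_card_sdiff_singleton h1)
  refine ⟨g, g', ?_, hgpc, hg'pc, hgmem, hg'mem⟩
  intro hcon
  apply hxy
  rw [← hg1, ← hg'1, hcon]



/-- If `L` gives at least `3` colors to `(v₁, w₁)`, at least `2` colors to every other
vertex of the first copy of the cycle, and at least `3` colors to all remaining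
vertices, then `C_{2k+1} □ P_n` is `L`-colorable. -/
theorem choosable_oddCycle_boxProd_path_special_lists (k n : ℕ) (hk : 1 ≤ k) (hn : 2 ≤ n)
    (L : Fin (2 * k + 1) × Fin n → Finset ℕ)
    (h1 : 3 ≤ (L (⟨0, by omega⟩, ⟨0, by omega⟩)).card)
    (h2 : ∀ i : Fin (2 * k + 1), i.val ≠ 0 → 2 ≤ (L (i, ⟨0, by omega⟩)).card)
    (h3 : ∀ (i : Fin (2 * k + 1)) (j : Fin n), j.val ≠ 0 → 3 ≤ (L (i, j)).card) :
    Choosable (cycleGraph (2 * k + 1) □ pathGraph n) L := by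
  classical
  have hn0 : 0 < n := by omega
  set Lnat : Fin (2 * k + 1) → ℕ → Finset ℕ :=
    fun i j => if h : j < n then L (i, ⟨j, h⟩) else ∅ with hLnatdef
  have hLnat : ∀ i j (h : j < n), Lnat i j = L (i, ⟨j, h⟩) := fun i j h => dif_pos h
  have main : ∀ t, t < n → ∃ c c' : ℕ → Fin (2 * k + 1) → ℕ,
      (∀ j ≤ t, (∀ i, c j i ∈ Lnat i j) ∧ (∀ i, c' j i ∈ Lnat i j) ∧ PC (c j) ∧ PC (c' j)) ∧
      (∀ j, j + 1 ≤ t → ∀ i, c j i ≠ c (j + 1) i ∧ c' j i ≠ c' (j + 1) i) ∧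
      c t ≠ c' t := by
    intro t
    induction t with
    | zero =>
      intro ht
      have h00 : (⟨0, by omega⟩ : Fin (2 * k + 1)) = 0 := by ext; simp
      have h1' : 3 ≤ (Lnat 0 0).card := by
        rw [hLnat 0 0 hn0]
        rw [h00] at h1
        exact h1
      have h2' : ∀ i, i ≠ 0 → 2 ≤ (Lnat i 0).card := by
        intro i hi
        rw [hLnat i 0 hn0]
        apply h2
        intro hcon
        exact hi (by ext; simpa using hcon)
      obtain ⟨g, g', hne, hgpc, hg'pc, hgmem, hg'mem⟩ :=
        firstcol hk (fun i => Lnat i 0) h1' h2'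
      refine ⟨fun _ => g, fun _ => g', ?_, ?_, hne⟩
      · intro j hj
        interval_cases j
        exact ⟨hgmem, hg'mem, hgpc, hg'pc⟩
      · intro j hj
        omega
    | succ t ih =>
      intro ht
      obtain ⟨c, c', hcols, hvert, hnee⟩ := ih (by omega)
      have h3' : ∀ i, 3 ≤ (Lnat i (t + 1)).card := by
        intro i
        rw [hLnat i (t + 1) ht]
        exact h3 i ⟨t + 1, ht⟩ (by simp)
      obtain ⟨b, g, g', hb, hgg', hgpc, hg'pc, hgc, hg'c⟩ :=
        key hk (fun i => Lnat i (t + 1)) h3' (c t) (c' t)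
          (hcols t le_rfl).2.2.1 (hcols t le_rfl).2.2.2 hnee
      rcases hb with hb | hb
      · refine ⟨fun j => if j = t + 1 then g else c j, fun j => if j = t + 1 then g' else c j,
          ?_, ?_, by simp [hgg']⟩
        · intro j hj
          by_cases hjt : j = t + 1
          · subst hjt
            simp only [if_pos rfl]
            exact ⟨fun i => (hgc i).1, fun i => (hg'c i).1, hgpc, hg'pc⟩
          · simp only [if_neg hjt]
            have hjle : j ≤ t := by omega
            exact ⟨(hcols j hjle).1, (hcols j hjle).1, (hcols j hjle).2.2.1, (hcols j hjle).2.2.1⟩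
        · intro j hj i
          simp only []
          by_cases hjt : j + 1 = t + 1
          · have hjeq : j = t := by omega
            subst hjeq
            constructor
            · rw [if_neg (by omega : ¬ j = j + 1), if_pos rfl]
              intro hcon
              exact (hgc i).2 (by rw [← hcon, hb])
            · rw [if_neg (by omega : ¬ j = j + 1), if_pos rfl]
              intro hcon
              exact (hg'c i).2 (by rw [← hcon, hb])
          · constructor
            · rw [if_neg (by omega : ¬ j = t + 1), if_neg hjt]
              exact (hvert j (by omega) i).1
            · rw [if_neg (by omega : ¬ j = t + 1), if_neg hjt]
              exact (hvert j (by omega) i).1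
      · refine ⟨fun j => if j = t + 1 then g else c' j, fun j => if j = t + 1 then g' else c' j,
          ?_, ?_, by simp [hgg']⟩
        · intro j hj
          by_cases hjt : j = t + 1
          · subst hjt
            simp only [if_pos rfl]
            exact ⟨fun i => (hgc i).1, fun i => (hg'c i).1, hgpc, hg'pc⟩
          · simp only [if_neg hjt]
            have hjle : j ≤ t := by omega
            exact ⟨(hcols j hjle).2.1, (hcols j hjle).2.1, (hcols j hjle).2.2.2,
              (hcols j hjle).2.2.2⟩
        · intro j hj i
          simp only []
          by_cases hjt : j + 1 = t + 1
          · have hjeq : j = t := by omega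
            subst hjeq
            constructor
            · rw [if_neg (by omega : ¬ j = j + 1), if_pos rfl]
              intro hcon
              exact (hgc i).2 (by rw [← hcon, hb])
            · rw [if_neg (by omega : ¬ j = j + 1), if_pos rfl]
              intro hcon
              exact (hg'c i).2 (by rw [← hcon, hb])
          · constructor
            · rw [if_neg (by omega : ¬ j = t + 1), if_neg hjt]
              exact (hvert j (by omega) i).2
            · rw [if_neg (by omega : ¬ j = t + 1), if_neg hjt]
              exact (hvert j (by omega) i).2
  obtain ⟨c, c', hcols, hvert, _⟩ := main (n - 1) (by omega)
  refine ⟨fun p => c p.2.val p.1, ?_, ?_⟩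
  · rintro ⟨i, j⟩
    have hmem := ((hcols j.val (by have := j.isLt; omega)).1 i)
    rwa [hLnat i j.val j.isLt] at hmem
  · rintro ⟨i, j⟩ ⟨i', j'⟩ hadj
    rw [SimpleGraph.boxProd_adj] at hadj
    rcases hadj with ⟨hcyc, hj⟩ | ⟨hpath, hi⟩
    · -- same column, cycle edge
      have hj' : j = j' := hj
      subst hj'
      have hpc : PC (c j.val) := (hcols j.val (by have := j.isLt; omega)).2.2.1
      rcases SimpleGraph.cycleGraph_adj'.mp hcyc with h | h
      · have hone : i - i' = 1 := by
          ext
          rw [h, Fin.val_one']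
          rw [Nat.mod_eq_of_lt (by omega)]
        have : i = i' + 1 := by linear_combination hone
        rw [this]
        exact (hpc i').symm
      · have hone : i' - i = 1 := by
          ext
          rw [h, Fin.val_one']
          rw [Nat.mod_eq_of_lt (by omega)]
        have : i' = i + 1 := by linear_combination hone
        rw [this]
        exact hpc i
    · -- same row, path edge
      obtain rfl : i = i' := hi
      have hpath' : (SimpleGraph.pathGraph n).Adj j j' := hpath
      show c j.val i ≠ c j'.val i
      rcases (SimpleGraph.pathGraph_adj).mp hpath' with h | h
      · have hv := (hvert j.val (by have := j'.isLt; omega) i).1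
        rw [h] at hv
        exact hv
      · have hv := (hvert j'.val (by have := j.isLt; omega) i).1
        rw [h] at hv
        exact fun hc => hv hc.symm


end ATPaper
end

section
/- Fix integers k ≥ 1 and n ≥ 2. The number of sequences (a_0, a_1, …, a_{n−2}) with each a_i ∈ {0, 1, …, 2k}, satisfying a_0 ≠ 0, a_i ≠ a_{i+1} for each 0 ≤ i ≤ n−3, and a_{n−2} ≠ 1, is odd. -/
open SimpleGraph Finset

attribute [local instance] Classical.propDecidable

namespace ATPaper

variable {V : Type*} [Fintype V]

/-! ### Auxiliary counting lemmas -/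

/-- The "good tail" condition: consecutive entries differ and the last entry is not `1`. -/
def okSeq {q m : ℕ} (a : Fin (m + 1) → Fin q) : Prop :=
  (∀ i : Fin m, a i.castSucc ≠ a i.succ) ∧ (a (Fin.last m)).val ≠ 1

/-- Number of good sequences of length `m+1` starting with `c`. -/
noncomputable def hcount (q m : ℕ) (c : Fin q) : ℕ :=
  (Finset.univ.filter fun a : Fin (m + 1) → Fin q => a 0 = c ∧ okSeq a).card

lemma hcount_zero (q : ℕ) (c : Fin q) :
    hcount q 0 c = if c.val = 1 then 0 else 1 := by
  have hlast : (Fin.last 0 : Fin 1) = 0 := Fin.fin_one_eq_zero _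
  unfold hcount
  split_ifs with h
  · refine Finset.card_eq_zero.2 (Finset.filter_eq_empty_iff.2 ?_)
    rintro a - ⟨h0, -, h1⟩
    rw [hlast, h0] at h1
    exact h1 h
  · refine Finset.card_eq_one.2 ⟨fun _ => c, ?_⟩
    ext a
    simp only [Finset.mem_filter, Finset.mem_univ, true_and, Finset.mem_singleton]
    constructor
    · rintro ⟨h0, -⟩
      funext i
      rw [Fin.fin_one_eq_zero i, h0]
    · rintro rfl
      exact ⟨rfl, fun i => i.elim0, by rwa [hlast]⟩

lemma hcount_succ (q m : ℕ) (c : Fin q) :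
    hcount q (m + 1) c = ∑ c' ∈ Finset.univ.filter (· ≠ c), hcount q m c' := by
  unfold hcount
  rw [Finset.card_eq_sum_card_fiberwise
    (f := fun a : Fin (m + 2) → Fin q => a 1)
    (t := Finset.univ.filter (· ≠ c))
    (by
      rintro a ha
      simp only [Finset.mem_coe, Finset.mem_filter, Finset.mem_univ, true_and] at ha ⊢
      obtain ⟨h0, hcons, -⟩ := ha
      have := hcons 0
      simp only [Fin.castSucc_zero, Fin.succ_zero_eq_one] at this
      rw [h0] at this
      exact fun hEq => this hEq.symm)]
  refine Finset.sum_congr rfl fun c' hc' => ?_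
  simp only [Finset.mem_filter, Finset.mem_univ, true_and] at hc'
  refine Finset.card_nbij' (fun a => Fin.tail a) (fun b => Fin.cons c b) ?_ ?_ ?_ ?_
  · rintro a ha
    simp only [Finset.mem_coe, Finset.mem_filter, Finset.mem_univ, true_and] at ha ⊢
    obtain ⟨⟨h0, hcons, hlast⟩, h1⟩ := ha
    refine ⟨h1, ?_, ?_⟩
    · intro i
      have := hcons i.succ
      rw [← Fin.succ_castSucc] at this
      exact this
    · rw [Fin.tail]
      rwa [Fin.succ_last]
  · rintro b hb
    simp only [Finset.mem_coe, Finset.mem_filter, Finset.mem_univ, true_and] at hb ⊢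
    obtain ⟨h0, hcons, hlast⟩ := hb
    refine ⟨⟨Fin.cons_zero _ _, ?_, ?_⟩, ?_⟩
    · intro i
      induction i using Fin.cases with
      | zero =>
          simp only [Fin.castSucc_zero, Fin.cons_zero, ← Fin.succ_zero_eq_one,
            Fin.cons_succ]
          rw [h0]
          exact fun hEq => hc' (hEq.symm)
      | succ j =>
          rw [← Fin.succ_castSucc]
          simp only [Fin.cons_succ]
          exact hcons j
    · have : (Fin.last (m + 1)) = (Fin.last m).succ := (Fin.succ_last m).symm
      rw [this, Fin.cons_succ]
      exact hlast
    · rw [← Fin.succ_zero_eq_one, Fin.cons_succ, h0]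
  · rintro a ha
    simp only [Finset.mem_coe, Finset.mem_filter, Finset.mem_univ, true_and] at ha
    rw [← ha.1.1]
    exact Fin.cons_self_tail a
  · rintro b hb
    exact Fin.tail_cons _ _

lemma hcount_parity (k : ℕ) (hk : 1 ≤ k) :
    ∀ (m : ℕ) (c : Fin (2 * k + 1)),
      hcount (2 * k + 1) m c % 2 = if c.val = 1 then 0 else 1 := by
  intro m
  induction m with
  | zero =>
      intro c
      rw [hcount_zero]
      split_ifs <;> rfl
  | succ m ih =>
      intro c
      have e1 : Fin (2 * k + 1) := ⟨1, by omega⟩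
      rw [hcount_succ, Finset.sum_nat_mod,
        Finset.sum_congr rfl fun c' _ => ih c']
      have hsum : (∑ c' ∈ Finset.univ.filter (· ≠ c),
          if c'.val = 1 then 0 else 1)
          = ((Finset.univ.filter (· ≠ c)).filter fun c' => ¬ c'.val = 1).card := by
        rw [Finset.card_filter]
        exact Finset.sum_congr rfl fun x _ => (ite_not _ _ _).symm
      rw [hsum, Finset.filter_filter]
      set E1 : Fin (2 * k + 1) := ⟨1, by omega⟩ with hE1
      by_cases hc : c = E1
      · have hset : (Finset.univ.filter fun c' : Fin (2 * k + 1) =>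
            c' ≠ c ∧ ¬ c'.val = 1) = Finset.univ.erase E1 := by
          ext x
          simp only [Finset.mem_filter, Finset.mem_univ, true_and, Finset.mem_erase,
            and_true, hc]
          constructor
          · rintro ⟨h1, -⟩; exact h1
          · intro h1
            refine ⟨h1, fun hval => h1 (Fin.ext (by simpa [hE1] using hval))⟩
        rw [hset, Finset.card_erase_of_mem (Finset.mem_univ _), Finset.card_univ,
          Fintype.card_fin]
        have : c.val = 1 := by rw [hc]
        rw [if_pos this]
        omega
      · have hset : (Finset.univ.filter fun c' : Fin (2 * k + 1) =>
            c' ≠ c ∧ ¬ c'.val = 1) = (Finset.univ.erase E1).erase c := by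
          ext x
          simp only [Finset.mem_filter, Finset.mem_univ, true_and, Finset.mem_erase,
            and_true]
          constructor
          · rintro ⟨h1, h2⟩
            exact ⟨h1, fun hx => h2 (by simp [hx, hE1])⟩
          · rintro ⟨h1, h2⟩
            refine ⟨h1, fun hval => h2 (Fin.ext (by simpa [hE1] using hval))⟩
        rw [hset, Finset.card_erase_of_mem, Finset.card_erase_of_mem (Finset.mem_univ _),
          Finset.card_univ, Fintype.card_fin]
        · have hcv : ¬ c.val = 1 := fun hval => hc (Fin.ext (by simpa [hE1] using hval))
          rw [if_neg hcv]
          omega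
        · exact Finset.mem_erase.2 ⟨hc, Finset.mem_univ _⟩

lemma main_aux (k m : ℕ) (hk : 1 ≤ k) :
    ((Finset.univ.filter fun a : Fin (m + 1) → Fin (2 * k + 1) =>
      (a 0).val ≠ 0 ∧ okSeq a).card) % 2 = 1 := by
  rw [Finset.card_eq_sum_card_fiberwise
    (f := fun a : Fin (m + 1) → Fin (2 * k + 1) => a 0)
    (t := Finset.univ.filter fun c : Fin (2 * k + 1) => c.val ≠ 0)
    (by
      rintro a ha
      simp only [Finset.mem_coe, Finset.mem_filter, Finset.mem_univ, true_and] at ha ⊢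
      exact ha.1)]
  have hfib : ∀ c ∈ Finset.univ.filter (fun c : Fin (2 * k + 1) => c.val ≠ 0),
      ((Finset.univ.filter fun a : Fin (m + 1) → Fin (2 * k + 1) =>
        (a 0).val ≠ 0 ∧ okSeq a).filter fun a => a 0 = c).card
        = hcount (2 * k + 1) m c := by
    intro c hc
    simp only [Finset.mem_filter, Finset.mem_univ, true_and] at hc
    unfold hcount
    congr 1
    rw [Finset.filter_filter]
    apply Finset.filter_congr
    intro a _
    constructor
    · rintro ⟨⟨-, hok⟩, h0⟩; exact ⟨h0, hok⟩
    · rintro ⟨h0, hok⟩; exact ⟨⟨by rw [h0]; exact hc, hok⟩, h0⟩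
  rw [Finset.sum_congr rfl hfib, Finset.sum_nat_mod,
    Finset.sum_congr rfl fun c _ => hcount_parity k hk m c]
  have hsum : (∑ c ∈ Finset.univ.filter (fun c : Fin (2 * k + 1) => c.val ≠ 0),
      if c.val = 1 then 0 else 1)
      = ((Finset.univ.filter fun c : Fin (2 * k + 1) => c.val ≠ 0).filter
          fun c => ¬ c.val = 1).card := by
    rw [Finset.card_filter]
    exact Finset.sum_congr rfl fun x _ => (ite_not _ _ _).symm
  rw [hsum, Finset.filter_filter]
  set E0 : Fin (2 * k + 1) := ⟨0, by omega⟩ with hE0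
  set E1 : Fin (2 * k + 1) := ⟨1, by omega⟩ with hE1
  have hset : (Finset.univ.filter fun c : Fin (2 * k + 1) =>
      c.val ≠ 0 ∧ ¬ c.val = 1) = (Finset.univ.erase E0).erase E1 := by
    ext x
    simp only [Finset.mem_filter, Finset.mem_univ, true_and, Finset.mem_erase, and_true]
    constructor
    · rintro ⟨h0, h1⟩
      exact ⟨fun hx => h1 (by simp [hx, hE1]), fun hx => h0 (by simp [hx, hE0])⟩
    · rintro ⟨h1, h0⟩
      exact ⟨fun hval => h0 (Fin.ext (by simpa [hE0] using hval)),
        fun hval => h1 (Fin.ext (by simpa [hE1] using hval))⟩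
  rw [hset, Finset.card_erase_of_mem, Finset.card_erase_of_mem (Finset.mem_univ _),
    Finset.card_univ, Fintype.card_fin]
  · omega
  · refine Finset.mem_erase.2 ⟨fun h => ?_, Finset.mem_univ _⟩
    have := congrArg Fin.val h
    simp [hE0, hE1] at this
  

/-- For `k ≥ 1` and `n ≥ 2`, the number of sequences `(a₀, …, a_{n-2})` with entries in
`{0, 1, …, 2k}` such that `a₀ ≠ 0`, consecutive entries differ, and `a_{n-2} ≠ 1`,
is odd. -/
theorem odd_card_levelSubsequences (k n : ℕ) (hk : 1 ≤ k) (hn : 2 ≤ n) :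
    Odd (Finset.univ.filter fun a : Fin (n - 1) → Fin (2 * k + 1) =>
      (a ⟨0, by omega⟩).val ≠ 0 ∧
      (∀ i : ℕ, (h : i + 1 < n - 1) → a ⟨i, by omega⟩ ≠ a ⟨i + 1, h⟩) ∧
      (a ⟨n - 2, by omega⟩).val ≠ 1).card := by
  obtain ⟨m, rfl⟩ : ∃ m, n = m + 2 := ⟨n - 2, by omega⟩
  rw [Nat.odd_iff]
  have hEq : (Finset.univ.filter fun a : Fin (m + 2 - 1) → Fin (2 * k + 1) =>
      (a ⟨0, by omega⟩).val ≠ 0 ∧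
      (∀ i : ℕ, (h : i + 1 < m + 2 - 1) → a ⟨i, by omega⟩ ≠ a ⟨i + 1, h⟩) ∧
      (a ⟨m + 2 - 2, by omega⟩).val ≠ 1)
      = (Finset.univ.filter fun a : Fin (m + 1) → Fin (2 * k + 1) =>
          (a 0).val ≠ 0 ∧ okSeq a) := by
    apply Finset.filter_congr
    intro a _
    unfold okSeq
    constructor
    · rintro ⟨h0, hcons, hlast⟩
      exact ⟨by simpa using h0, fun i => hcons i.val (by omega), hlast⟩
    · rintro ⟨h0, hcons, hlast⟩
      exact ⟨by simpa using h0, fun i h => hcons ⟨i, by omega⟩, hlast⟩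
  rw [hEq]
  exact main_aux k m hk

end ATPaper
end

section
/- The list chromatic number of C_6^2 □ P_2 is strictly greater than 3, where C_6^2 is the square of the cycle on 6 vertices; consequently C_6^2 □ P_2 is not chromatic-choosable even though χ(C_6^2) = 3 and C_6^2 is chromatic-choosable. -/
open SimpleGraph Finset

attribute [local instance] Classical.propDecidable

namespace ATPaper

variable {V : Type*} [Fintype V]

section AuxAT
open SimpleGraph Finset

lemma cyc_adj_elim : ∀ x y : Fin 6, (cycleGraph 6).Adj x y → (y - x = 1 ∨ y - x = 5) := by decide

lemma cyc_adj_succ_s17 : ∀ i : Fin 6, (cycleGraph 6).Adj i (i+1) := by decide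
lemma cyc_adj_pred : ∀ i : Fin 6, (cycleGraph 6).Adj i (i+5) := by decide

lemma cyc_key2 : ∀ i a j : Fin 6, (a - i = 1 ∨ a - i = 5) → (j - a = 1 ∨ j - a = 5) →
    i ≠ j → (j - i = 1 ∨ j - i = 2 ∨ j - i = 4 ∨ j - i = 5) := by decide

lemma path2_adj (u v : Fin 2) : (pathGraph 2).Adj u v ↔ u ≠ v := by
  rw [pathGraph_adj, ne_eq, Fin.ext_iff]
  have hu := u.isLt; have hv := v.isLt
  omega

lemma pow_adj_iff (i j : Fin 6) :
    (graphPower (cycleGraph 6) 2).Adj i j ↔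
      (j - i = 1 ∨ j - i = 2 ∨ j - i = 4 ∨ j - i = 5) := by
  constructor
  · rintro ⟨hne, hr, hd⟩
    obtain ⟨p, hp⟩ := hr.exists_walk_length_eq_dist
    have hl : p.length ≤ 2 := hp ▸ hd
    cases p with
    | nil => exact absurd rfl hne
    | cons h q =>
      cases q with
      | nil =>
        rcases cyc_adj_elim _ _ h with h1 | h1
        · exact Or.inl h1
        · exact Or.inr (Or.inr (Or.inr h1))
      | cons h2 q2 =>
        cases q2 with
        | nil => exact cyc_key2 _ _ _ (cyc_adj_elim _ _ h) (cyc_adj_elim _ _ h2) hne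
        | cons h3 q3 => simp [SimpleGraph.Walk.length_cons] at hl
  · intro hd
    have hne : i ≠ j := by
      rintro rfl
      rw [sub_self] at hd
      rcases hd with h | h | h | h <;> exact absurd h (by decide)
    have hj : j = i + (j - i) := by abel
    rcases hd with h | h | h | h <;> rw [h] at hj <;> subst hj <;>
      refine ⟨hne, ?_, ?_⟩
    · exact (cyc_adj_succ_s17 i).reachable
    · exact le_trans (SimpleGraph.dist_le (SimpleGraph.Walk.cons (cyc_adj_succ_s17 i) SimpleGraph.Walk.nil)) (by simp)
    · exact ((SimpleGraph.Walk.cons (cyc_adj_succ_s17 i)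
        (SimpleGraph.Walk.cons (cyc_adj_succ_s17 (i+1)) SimpleGraph.Walk.nil)).copy rfl
          (by rw [show ∀ k : Fin 6, k + 1 + 1 = k + 2 from by decide])).reachable
    · exact le_trans (SimpleGraph.dist_le ((SimpleGraph.Walk.cons (cyc_adj_succ_s17 i)
        (SimpleGraph.Walk.cons (cyc_adj_succ_s17 (i+1)) SimpleGraph.Walk.nil)).copy rfl
          (by rw [show ∀ k : Fin 6, k + 1 + 1 = k + 2 from by decide]))) (by simp)
    · exact ((SimpleGraph.Walk.cons (cyc_adj_pred i)
        (SimpleGraph.Walk.cons (cyc_adj_pred (i+5)) SimpleGraph.Walk.nil)).copy rfl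
          (by rw [show ∀ k : Fin 6, k + 5 + 5 = k + 4 from by decide])).reachable
    · exact le_trans (SimpleGraph.dist_le ((SimpleGraph.Walk.cons (cyc_adj_pred i)
        (SimpleGraph.Walk.cons (cyc_adj_pred (i+5)) SimpleGraph.Walk.nil)).copy rfl
          (by rw [show ∀ k : Fin 6, k + 5 + 5 = k + 4 from by decide]))) (by simp)
    · exact (cyc_adj_pred i).reachable
    · exact le_trans (SimpleGraph.dist_le (SimpleGraph.Walk.cons (cyc_adj_pred i) SimpleGraph.Walk.nil)) (by simp)

end AuxAT
section AuxCheck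
open SimpleGraph Finset

def pairColors : Fin 6 → List ℕ := ![[1,3,4],[1,2,3],[1,3,5],[1,2,5],[1,4,5],[1,2,4]]

def badL : Fin 6 × Fin 2 → Finset ℕ := fun v => (pairColors v.1).toFinset

def adjB : Fin 6 × Fin 2 → Fin 6 × Fin 2 → Bool := fun a b =>
  (a.2 == b.2 && (b.1 - a.1 == 1 || b.1 - a.1 == 2 || b.1 - a.1 == 4 || b.1 - a.1 == 5))
  || (a.1 == b.1 && !(a.2 == b.2))

def vertsL : List (Fin 6 × Fin 2) :=
  [(0,0),(0,1),(1,0),(1,1),(2,0),(2,1),(3,0),(3,1),(4,0),(4,1),(5,0),(5,1)]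

def check : List (Fin 6 × Fin 2) → List ((Fin 6 × Fin 2) × ℕ) → Bool
  | [], _ => true
  | v :: rest, acc =>
      (pairColors v.1).any fun c =>
        (acc.all fun p => !(adjB v p.1) || c != p.2) && check rest ((v, c) :: acc)

lemma adjB_sound {a b : Fin 6 × Fin 2} (h : adjB a b = true) :
    (graphPower (cycleGraph 6) 2 □ pathGraph 2).Adj a b := by
  obtain ⟨i, t⟩ := a; obtain ⟨j, s⟩ := b
  simp only [adjB, Bool.or_eq_true, Bool.and_eq_true, beq_iff_eq,
    Bool.not_eq_true', beq_eq_false_iff_ne, ne_eq] at h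
  rw [SimpleGraph.boxProd_adj]
  rcases h with ⟨hts, hd⟩ | ⟨hij, hts⟩
  · exact Or.inl ⟨(pow_adj_iff i j).2 (by tauto), hts⟩
  · exact Or.inr ⟨(path2_adj t s).2 hts, hij⟩

lemma check_complete (f : Fin 6 × Fin 2 → ℕ)
    (hL : ∀ v : Fin 6 × Fin 2, f v ∈ pairColors v.1)
    (hp : ∀ u v, (graphPower (cycleGraph 6) 2 □ pathGraph 2).Adj u v → f u ≠ f v) :
    ∀ (vs : List (Fin 6 × Fin 2)) (acc : List ((Fin 6 × Fin 2) × ℕ)),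
      (∀ p ∈ acc, f p.1 = p.2) → check vs acc = true := by
  intro vs
  induction vs with
  | nil => intro acc _; rfl
  | cons v rest ih =>
    intro acc hacc
    simp only [check]
    rw [List.any_eq_true]
    refine ⟨f v, hL v, ?_⟩
    rw [Bool.and_eq_true]
    refine ⟨?_, ih ((v, f v) :: acc) ?_⟩
    · rw [List.all_eq_true]
      intro p hpmem
      cases hb : adjB v p.1 with
      | false => simp
      | true =>
        have hne : f v ≠ p.2 := (hacc p hpmem) ▸ hp v p.1 (adjB_sound hb)
        simp [hne]
    · rintro p hp'
      rcases List.mem_cons.mp hp' with rfl | hmem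
      · rfl
      · exact hacc p hmem

lemma check_false : check vertsL [] = false := by rfl

lemma not_choosable_badL :
    ¬ Choosable (graphPower (cycleGraph 6) 2 □ pathGraph 2) badL := by
  rintro ⟨f, hf, hadj⟩
  have h := check_complete f (fun v => List.mem_toFinset.mp (hf v)) hadj vertsL []
    (by intro p hp; simp at hp)
  rw [check_false] at h
  exact Bool.false_ne_true h

lemma badL_card : ∀ v : Fin 6 × Fin 2, (badL v).card = 3 := by decide

end AuxCheck
section AuxChoose
open SimpleGraph Finset

lemma isKChoosable_mono {W : Type*} (G : SimpleGraph W) {k m : ℕ} (h : k ≤ m)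
    (hk : IsKChoosable G k) : IsKChoosable G m :=
  fun L hL => hk L (fun v => le_trans h (hL v))

lemma isKChoosable_card {W : Type*} [Fintype W] (G : SimpleGraph W) :
    IsKChoosable G (Fintype.card W) := by
  classical
  intro L hL
  have hall : ∀ S : Finset W, S.card ≤ (S.biUnion L).card := by
    intro S
    rcases S.eq_empty_or_nonempty with rfl | ⟨i, hi⟩
    · simp
    · calc S.card ≤ Fintype.card W := by simpa using Finset.card_le_univ S
        _ ≤ (L i).card := hL i
        _ ≤ _ := Finset.card_le_card (Finset.subset_biUnion_of_mem L hi)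
  obtain ⟨f, finj, hf⟩ := (Finset.all_card_le_biUnion_card_iff_exists_injective L).1 hall
  exact ⟨f, hf, fun u v h he => G.ne_of_adj h (finj he)⟩

lemma k22 (A1 A2 B1 B2 : Finset ℕ) (hA1 : 2 ≤ A1.card) (hA2 : 2 ≤ A2.card)
    (hB1 : 2 ≤ B1.card) (hB2 : 2 ≤ B2.card) :
    ∃ a1 a2 b1 b2, a1 ∈ A1 ∧ a2 ∈ A2 ∧ b1 ∈ B1 ∧ b2 ∈ B2 ∧
      a1 ≠ b1 ∧ a1 ≠ b2 ∧ a2 ≠ b1 ∧ a2 ≠ b2 := by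
  by_cases hA : (A1 ∩ A2).Nonempty
  · obtain ⟨a, ha⟩ := hA
    rw [Finset.mem_inter] at ha
    obtain ⟨b1, hb1, hb1a⟩ := Finset.exists_mem_ne hB1 a
    obtain ⟨b2, hb2, hb2a⟩ := Finset.exists_mem_ne hB2 a
    exact ⟨a, a, b1, b2, ha.1, ha.2, hb1, hb2,
      fun h => hb1a h.symm, fun h => hb2a h.symm, fun h => hb1a h.symm, fun h => hb2a h.symm⟩
  by_cases hB : (B1 ∩ B2).Nonempty
  · obtain ⟨b, hb⟩ := hB
    rw [Finset.mem_inter] at hb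
    obtain ⟨a1, ha1, ha1b⟩ := Finset.exists_mem_ne hA1 b
    obtain ⟨a2, ha2, ha2b⟩ := Finset.exists_mem_ne hA2 b
    exact ⟨a1, a2, b, b, ha1, ha2, hb.1, hb.2, ha1b, ha1b, ha2b, ha2b⟩
  have hcross : ∀ x ∈ A1, ∀ y ∈ A2, x ≠ y := by
    intro x hx y hy h
    exact hA ⟨x, Finset.mem_inter.mpr ⟨hx, h ▸ hy⟩⟩
  by_cases hgood : ∃ a1 ∈ A1, ∃ a2 ∈ A2,
      (B1 \ {a1, a2}).Nonempty ∧ (B2 \ {a1, a2}).Nonempty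
  · obtain ⟨a1, ha1, a2, ha2, ⟨b1, hb1⟩, ⟨b2, hb2⟩⟩ := hgood
    rw [Finset.mem_sdiff] at hb1 hb2
    have h1 := hb1.2; have h2 := hb2.2
    simp only [Finset.mem_insert, Finset.mem_singleton, not_or] at h1 h2
    exact ⟨a1, a2, b1, b2, ha1, ha2, hb1.1, hb2.1,
      fun h => h1.1 h.symm, fun h => h2.1 h.symm, fun h => h1.2 h.symm, fun h => h2.2 h.symm⟩
  exfalso
  push_neg at hgood
  have hfull : ∀ (B : Finset ℕ), 2 ≤ B.card → ∀ a1 a2 : ℕ, ¬(B \ {a1, a2}).Nonempty →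
      B = {a1, a2} := by
    intro B hBc a1 a2 h
    rw [Finset.not_nonempty_iff_eq_empty, Finset.sdiff_eq_empty_iff_subset] at h
    refine Finset.eq_of_subset_of_card_le h (le_trans ?_ hBc)
    exact (Finset.card_insert_le _ _).trans (by simp)
  have hBad : ∀ a1 ∈ A1, ∀ a2 ∈ A2, B1 = {a1, a2} ∨ B2 = {a1, a2} := by
    intro a1 ha1 a2 ha2
    by_cases hP : (B1 \ {a1, a2}).Nonempty
    · exact Or.inr (hfull B2 hB2 a1 a2 (by intro hQ; exact Finset.not_nonempty_iff_eq_empty.mpr (hgood a1 ha1 a2 ha2 hP) hQ))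
    · exact Or.inl (hfull B1 hB1 a1 a2 hP)
  obtain ⟨x1, hx1, x1', hx1', hne1⟩ := Finset.one_lt_card.mp hA1
  obtain ⟨x2, hx2, x2', hx2', hne2⟩ := Finset.one_lt_card.mp hA2
  have mem_tool : ∀ y x1 x2 : ℕ, y ∈ ({x1, x2} : Finset ℕ) → y = x1 ∨ y = x2 := by
    intro y a b h
    simpa only [Finset.mem_insert, Finset.mem_singleton] using h
  rcases hBad x1 hx1 x2 hx2 with e1 | e1
  · rcases hBad x1 hx1 x2' hx2' with e2 | e2
    · -- B1 = {x1,x2} = {x1,x2'}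
      have : x2' ∈ ({x1, x2} : Finset ℕ) := by rw [← e1, e2]; simp
      rcases mem_tool _ _ _ this with h' | h'
      · exact hcross x1 hx1 x2' hx2' h'.symm
      · exact hne2 h'.symm
    · rcases hBad x1' hx1' x2 hx2 with e3 | e3
      · -- B1 = {x1,x2} = {x1',x2}
        have : x1' ∈ ({x1, x2} : Finset ℕ) := by rw [← e1, e3]; simp
        rcases mem_tool _ _ _ this with h' | h'
        · exact hne1 h'.symm
        · exact hcross x1' hx1' x2 hx2 h'
      · -- B2 = {x1,x2'} = {x1',x2}
        have : x1' ∈ ({x1, x2'} : Finset ℕ) := by rw [← e2, e3]; simp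
        rcases mem_tool _ _ _ this with h' | h'
        · exact hne1 h'.symm
        · exact hcross x1' hx1' x2' hx2' h'
  · rcases hBad x1 hx1 x2' hx2' with e2 | e2
    · rcases hBad x1' hx1' x2 hx2 with e3 | e3
      · -- B1 = {x1,x2'} = {x1',x2}
        have : x1' ∈ ({x1, x2'} : Finset ℕ) := by rw [← e2, e3]; simp
        rcases mem_tool _ _ _ this with h' | h'
        · exact hne1 h'.symm
        · exact hcross x1' hx1' x2' hx2' h'
      · -- B2 = {x1,x2} = {x1',x2}
        have : x1' ∈ ({x1, x2} : Finset ℕ) := by rw [← e1, e3]; simp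
        rcases mem_tool _ _ _ this with h' | h'
        · exact hne1 h'.symm
        · exact hcross x1' hx1' x2 hx2 h'
    · -- B2 = {x1,x2} = {x1,x2'}
      have : x2' ∈ ({x1, x2} : Finset ℕ) := by rw [← e1, e2]; simp
      rcases mem_tool _ _ _ this with h' | h'
      · exact hcross x1 hx1 x2' hx2' h'.symm
      · exact hne2 h'.symm

end AuxChoose
section AuxOct
open SimpleGraph Finset

lemma oct_choosable : IsKChoosable (graphPower (cycleGraph 6) 2) 3 := by
  classical
  intro L hL
  by_cases hex : ∃ i : Fin 6, (L i ∩ L (i + 3)).Nonempty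
  · obtain ⟨i₀, c, hc⟩ := hex
    rw [Finset.mem_inter] at hc
    have hcardE : ∀ j : Fin 6, 2 ≤ ((L j).erase c).card := fun j => by
      have := Finset.pred_card_le_card_erase (s := L j) (a := c)
      have := hL j
      omega
    obtain ⟨a1, a2, b1, b2, ha1, ha2, hb1, hb2, hab11, hab12, hab21, hab22⟩ :=
      k22 ((L (i₀+1)).erase c) ((L (i₀+4)).erase c) ((L (i₀+2)).erase c) ((L (i₀+5)).erase c)
        (hcardE _) (hcardE _) (hcardE _) (hcardE _)
    have ha1' := Finset.mem_erase.mp ha1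
    have ha2' := Finset.mem_erase.mp ha2
    have hb1' := Finset.mem_erase.mp hb1
    have hb2' := Finset.mem_erase.mp hb2
    have hca1 : c ≠ a1 := fun h => ha1'.1 h.symm
    have hca2 : c ≠ a2 := fun h => ha2'.1 h.symm
    have hcb1 : c ≠ b1 := fun h => hb1'.1 h.symm
    have hcb2 : c ≠ b2 := fun h => hb2'.1 h.symm
    have hca1' : a1 ≠ c := ha1'.1
    have hca2' : a2 ≠ c := ha2'.1
    have hcb1' : b1 ≠ c := hb1'.1
    have hcb2' : b2 ≠ c := hb2'.1
    refine ⟨fun j => (![c, a1, b1, c, a2, b2] : Fin 6 → ℕ) (j - i₀), ?_, ?_⟩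
    · intro j
      have hj : j = i₀ + (j - i₀) := by abel
      have hmem : ∀ d : Fin 6, (![c, a1, b1, c, a2, b2] : Fin 6 → ℕ) d ∈ L (i₀ + d) := by
        intro d
        fin_cases d
        · simpa using hc.1
        · simpa using ha1'.2
        · simpa using hb1'.2
        · simpa using hc.2
        · simpa using ha2'.2
        · simpa using hb2'.2
      have := hmem (j - i₀)
      rwa [← hj] at this
    · intro u v huv
      rw [pow_adj_iff] at huv
      have hdiff : (v - i₀) - (u - i₀) = v - u := by abel
      have hgne : ∀ d e : Fin 6, (e - d = 1 ∨ e - d = 2 ∨ e - d = 4 ∨ e - d = 5) →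
          (![c, a1, b1, c, a2, b2] : Fin 6 → ℕ) d ≠ (![c, a1, b1, c, a2, b2] : Fin 6 → ℕ) e := by
        intro d e h
        fin_cases d <;> fin_cases e <;>
          first
            | exact absurd h (by decide)
            | exact hca1 | exact hca2 | exact hcb1 | exact hcb2
            | exact hca1' | exact hca2' | exact hcb1' | exact hcb2'
            | exact hab11 | exact hab12 | exact hab21 | exact hab22
            | exact hab11.symm | exact hab12.symm | exact hab21.symm | exact hab22.symm
      exact hgne (u - i₀) (v - i₀) (by rw [hdiff]; exact huv)
  · push_neg at hex
    have hdis : ∀ i : Fin 6, Disjoint (L i) (L (i + 3)) := fun i => by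
      rw [Finset.disjoint_iff_inter_eq_empty]
      exact hex i
    have hall : ∀ S : Finset (Fin 6), S.card ≤ (S.biUnion L).card := by
      intro S
      by_cases hp : ∃ i, i ∈ S ∧ i + 3 ∈ S
      · obtain ⟨i, hi, hi3⟩ := hp
        have h6 : 6 ≤ (L i ∪ L (i + 3)).card := by
          rw [Finset.card_union_of_disjoint (hdis i)]
          have := hL i; have := hL (i + 3); omega
        calc S.card ≤ 6 := by simpa using Finset.card_le_univ S
          _ ≤ (L i ∪ L (i + 3)).card := h6
          _ ≤ _ := Finset.card_le_card (Finset.union_subset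
              (Finset.subset_biUnion_of_mem L hi) (Finset.subset_biUnion_of_mem L hi3))
      · push_neg at hp
        have hS3 : S.card ≤ 3 := by
          have key : ∀ S : Finset (Fin 6), (∀ i ∈ S, i + 3 ∉ S) → S.card ≤ 3 := by decide
          exact key S hp
        rcases S.eq_empty_or_nonempty with rfl | ⟨i, hi⟩
        · simp
        · calc S.card ≤ 3 := hS3
            _ ≤ (L i).card := hL i
            _ ≤ _ := Finset.card_le_card (Finset.subset_biUnion_of_mem L hi)
    obtain ⟨f, finj, hf⟩ := (Finset.all_card_le_biUnion_card_iff_exists_injective L).1 hall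
    exact ⟨f, hf, fun u v h he => h.1 (finj he)⟩

end AuxOct
/-- `χ_ℓ(C₆² □ P₂) > 3`; consequently `C₆² □ P₂` is not chromatic-choosable, even though
`χ(C₆²) = 3` and `C₆²` is chromatic-choosable. -/
theorem three_lt_listChromaticNumber_pow_cycle_six_boxProd_path :
    3 < listChromaticNumber (graphPower (cycleGraph 6) 2 □ pathGraph 2) ∧
    (graphPower (cycleGraph 6) 2 □ pathGraph 2).chromaticNumber ≠
      (listChromaticNumber (graphPower (cycleGraph 6) 2 □ pathGraph 2) : ℕ∞) ∧
    (graphPower (cycleGraph 6) 2).chromaticNumber = 3 ∧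
    (graphPower (cycleGraph 6) 2).chromaticNumber =
      (listChromaticNumber (graphPower (cycleGraph 6) 2) : ℕ∞) := by
  classical
  have hG2card : IsKChoosable (graphPower (cycleGraph 6) 2 □ pathGraph 2) 12 := by
    have h := isKChoosable_card (W := Fin 6 × Fin 2) (graphPower (cycleGraph 6) 2 □ pathGraph 2)
    simpa using h
  have hne2 : {k | IsKChoosable (graphPower (cycleGraph 6) 2 □ pathGraph 2) k}.Nonempty :=
    ⟨12, hG2card⟩
  have hmemInf := Nat.sInf_mem hne2
  have h4 : 4 ≤ sInf {k | IsKChoosable (graphPower (cycleGraph 6) 2 □ pathGraph 2) k} := by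
    by_contra h
    push_neg at h
    have hch : Choosable (graphPower (cycleGraph 6) 2 □ pathGraph 2) badL :=
      hmemInf badL (fun v => by rw [badL_card v]; omega)
    exact not_choosable_badL hch
  have h1 : 3 < listChromaticNumber (graphPower (cycleGraph 6) 2 □ pathGraph 2) := by
    unfold listChromaticNumber
    omega
  have hcol2 : (graphPower (cycleGraph 6) 2 □ pathGraph 2).Colorable 3 := by
    refine ⟨SimpleGraph.Coloring.mk (fun v => ⟨(v.1.val + v.2.val) % 3, by omega⟩) ?_⟩
    rintro ⟨i, t⟩ ⟨j, s⟩ hadj heq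
    rw [SimpleGraph.boxProd_adj] at hadj
    have heq' : (i.val + t.val) % 3 = (j.val + s.val) % 3 := congrArg Fin.val heq
    rcases hadj with ⟨hp, hts⟩ | ⟨hp, hij⟩
    · rw [pow_adj_iff] at hp
      obtain rfl : t = s := hts
      have key : ∀ i j : Fin 6, (j - i = 1 ∨ j - i = 2 ∨ j - i = 4 ∨ j - i = 5) →
          ∀ t : Fin 2, ¬((i.val + t.val) % 3 = (j.val + t.val) % 3) := by decide
      exact key i j hp t heq'
    · rw [path2_adj] at hp
      obtain rfl : i = j := hij
      have key2 : ∀ (i : Fin 6) (t s : Fin 2), t ≠ s →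
          ¬((i.val + t.val) % 3 = (i.val + s.val) % 3) := by decide
      exact key2 i t s hp heq'
  have hchrom2le : (graphPower (cycleGraph 6) 2 □ pathGraph 2).chromaticNumber ≤ 3 := by
    exact_mod_cast hcol2.chromaticNumber_le
  have h2 : (graphPower (cycleGraph 6) 2 □ pathGraph 2).chromaticNumber ≠
      (listChromaticNumber (graphPower (cycleGraph 6) 2 □ pathGraph 2) : ℕ∞) := by
    intro heq
    have h4' : ((4 : ℕ) : ℕ∞) ≤
        (listChromaticNumber (graphPower (cycleGraph 6) 2 □ pathGraph 2) : ℕ∞) := by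
      exact_mod_cast h1
    rw [← heq] at h4'
    have hcon := le_trans h4' hchrom2le
    norm_num at hcon
  have adj01 : (graphPower (cycleGraph 6) 2).Adj 0 1 := (pow_adj_iff 0 1).2 (by decide)
  have adj12 : (graphPower (cycleGraph 6) 2).Adj 1 2 := (pow_adj_iff 1 2).2 (by decide)
  have adj02 : (graphPower (cycleGraph 6) 2).Adj 0 2 := (pow_adj_iff 0 2).2 (by decide)
  have hcol1 : (graphPower (cycleGraph 6) 2).Colorable 3 := by
    refine ⟨SimpleGraph.Coloring.mk (fun i => ⟨i.val % 3, by omega⟩) ?_⟩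
    intro i j hadj heq
    rw [pow_adj_iff] at hadj
    have heq' : i.val % 3 = j.val % 3 := congrArg Fin.val heq
    have key : ∀ i j : Fin 6, (j - i = 1 ∨ j - i = 2 ∨ j - i = 4 ∨ j - i = 5) →
        ¬(i.val % 3 = j.val % 3) := by decide
    exact key i j hadj heq'
  have h3 : (graphPower (cycleGraph 6) 2).chromaticNumber = 3 := by
    refine le_antisymm (by exact_mod_cast hcol1.chromaticNumber_le) ?_
    have hle : ((3 : ℕ) : ℕ∞) ≤ (graphPower (cycleGraph 6) 2).chromaticNumber := by
      rw [SimpleGraph.le_chromaticNumber_iff_forall_surjective]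
      intro C x
      have h01 : C 0 ≠ C 1 := C.valid adj01
      have h02 : C 0 ≠ C 2 := C.valid adj02
      have h12 : C 1 ≠ C 2 := C.valid adj12
      have key : ∀ a b c x : Fin 3, a ≠ b → a ≠ c → b ≠ c → x = a ∨ x = b ∨ x = c := by decide
      rcases key (C 0) (C 1) (C 2) x h01 h02 h12 with h | h | h
      exacts [⟨0, h.symm⟩, ⟨1, h.symm⟩, ⟨2, h.symm⟩]
    exact_mod_cast hle
  have hLC1 : listChromaticNumber (graphPower (cycleGraph 6) 2) = 3 := by
    unfold listChromaticNumber
    refine le_antisymm (Nat.sInf_le oct_choosable) ?_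
    have hmem := Nat.sInf_mem
      (⟨3, oct_choosable⟩ : {k | IsKChoosable (graphPower (cycleGraph 6) 2) k}.Nonempty)
    by_contra h
    push_neg at h
    obtain ⟨f, hf, hadj⟩ := hmem (fun _ => ({1, 2} : Finset ℕ))
      (fun v => by
        show sInf {k | IsKChoosable (graphPower (cycleGraph 6) 2) k} ≤ ({1, 2} : Finset ℕ).card
        have hc : ({1, 2} : Finset ℕ).card = 2 := by decide
        omega)
    have m0 := hf 0; have m1 := hf 1; have m2 := hf 2
    simp only [Finset.mem_insert, Finset.mem_singleton] at m0 m1 m2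
    have n01 := hadj 0 1 adj01
    have n02 := hadj 0 2 adj02
    have n12 := hadj 1 2 adj12
    rcases m0 with h0 | h0 <;> rcases m1 with h1 | h1 <;> rcases m2 with h2 | h2 <;> omega
  refine ⟨h1, h2, h3, ?_⟩
  rw [h3, hLC1]
  norm_num

end ATPaper
end
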